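/- arXiv:1806.04721 — 6 statements merged into one kernel-verified Lean document; each statement's English description precedes it below -/
import Mathlib

section
/- Let (G_n, δ_n)_{n∈ℕ} be a sequence of proper metric monoids such that for every n ∈ ℕ the metric δ_n is bi-invariant (both left- and right-invariant), and suppose the sequence is Cauchy for the Gromov-Hausdorff monoid distance Υ. Then there exists a proper metric monoid (G, δ) such that lim_{n→∞} Υ((G_n,δ_n),(G,δ)) = 0. -/
open Filter Metric Topology

/-- `(ς, κ)` is an `r`-local `ε`-almost isometric isomorphism between the metric
monoids `G` and `H`. -/
def IsLocAlmostIsoIso {G H : Type*} [Monoid G] [MetricSpace G] [Monoid H] [MetricSpace H]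
    (ς : G → H) (κ : H → G) (ε r : ℝ) : Prop :=
  ς 1 = 1 ∧ κ 1 = 1 ∧
    (∀ g ∈ Metric.closedBall (1 : G) r, ∀ g' ∈ Metric.closedBall (1 : G) r,
      ∀ h ∈ Metric.closedBall (1 : H) r,
        |dist (ς g * ς g') h - dist (g * g') (κ h)| ≤ ε) ∧
    (∀ g ∈ Metric.closedBall (1 : H) r, ∀ g' ∈ Metric.closedBall (1 : H) r,
      ∀ h ∈ Metric.closedBall (1 : G) r,
        |dist (κ g * κ g') h - dist (g * g') (ς h)| ≤ ε)
/-- The Gromov-Hausdorff monoid distance `Υ` between two (proper) metric monoids: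
`min {√2/2, inf {ε > 0 : ∃ a (1/ε)-local ε-almost isometric isomorphism}}`. -/
noncomputable def Upsilon (G H : Type*) [Monoid G] [MetricSpace G] [Monoid H]
    [MetricSpace H] : ℝ :=
  sInf ({ε : ℝ | 0 < ε ∧ ∃ (ς : G → H) (κ : H → G), IsLocAlmostIsoIso ς κ ε (1 / ε)} ∪
    {Real.sqrt 2 / 2})

/- ### Auxiliary lemmas -/

lemma UCBM.le_of_forall_pos_le_add' {a b : ℝ} (h : ∀ ε : ℝ, 0 < ε → a ≤ b + ε) : a ≤ b := by
  by_contra hc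
  push_neg at hc
  have := h ((a - b) / 2) (by linarith)
  linarith

lemma UCBM.ulim_exists' {X : Type*} [MetricSpace X] [ProperSpace X] (U : Ultrafilter ℕ)
    (f : ℕ → X) (c : X) (C : ℝ) (hb : ∀ᶠ m in (U : Filter ℕ), f m ∈ Metric.closedBall c C) :
    ∃ L, Filter.Tendsto f (U : Filter ℕ) (nhds L) := by
  obtain ⟨p, -, hp⟩ := (isCompact_closedBall c C).ultrafilter_le_nhds (U.map f)
    (by rwa [Ultrafilter.coe_map, le_principal_iff, mem_map])
  exact ⟨p, by rwa [Ultrafilter.coe_map] at hp⟩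

open Classical in
noncomputable def UCBM.ulim {X : Type*} [TopologicalSpace X] (U : Ultrafilter ℕ) (d : X)
    (f : ℕ → X) : X :=
  if h : ∃ L, Filter.Tendsto f (U : Filter ℕ) (nhds L) then h.choose else d

lemma UCBM.tendsto_ulim {X : Type*} [TopologicalSpace X] {U : Ultrafilter ℕ} {f : ℕ → X}
    (h : ∃ L, Filter.Tendsto f (U : Filter ℕ) (nhds L)) (d : X) :
    Filter.Tendsto f (U : Filter ℕ) (nhds (UCBM.ulim U d f)) := by
  classical
  rw [UCBM.ulim, dif_pos h]
  exact h.choose_spec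

lemma UCBM.upsilon_nonneg (G H : Type*) [Monoid G] [MetricSpace G] [Monoid H] [MetricSpace H] :
    0 ≤ Upsilon G H := by
  rw [Upsilon]
  refine le_csInf ⟨Real.sqrt 2 / 2, Set.mem_union_right _ rfl⟩ ?_
  rintro b (⟨hb, -⟩ | rfl)
  · exact hb.le
  · positivity

lemma UCBM.upsilon_le {G H : Type*} [Monoid G] [MetricSpace G] [Monoid H] [MetricSpace H]
    {ε : ℝ} (hε : 0 < ε) (h : ∃ (ς : G → H) (κ : H → G), IsLocAlmostIsoIso ς κ ε (1 / ε)) :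
    Upsilon G H ≤ ε := by
  rw [Upsilon]
  refine csInf_le ⟨0, ?_⟩ (Set.mem_union_left _ ⟨hε, h⟩)
  rintro b (⟨hb, -⟩ | rfl)
  · exact hb.le
  · positivity

lemma UCBM.isLoc_mono {G H : Type*} [Monoid G] [MetricSpace G] [Monoid H] [MetricSpace H]
    {ς : G → H} {κ : H → G} {ε ε' r r' : ℝ} (h : IsLocAlmostIsoIso ς κ ε r)
    (hε : ε ≤ ε') (hr : r' ≤ r) : IsLocAlmostIsoIso ς κ ε' r' := by
  obtain ⟨h1, h2, h3, h4⟩ := h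
  exact ⟨h1, h2,
    fun g hg g' hg' x hx => (h3 g (Metric.closedBall_subset_closedBall hr hg) g'
      (Metric.closedBall_subset_closedBall hr hg') x
      (Metric.closedBall_subset_closedBall hr hx)).trans hε,
    fun g hg g' hg' x hx => (h4 g (Metric.closedBall_subset_closedBall hr hg) g'
      (Metric.closedBall_subset_closedBall hr hg') x
      (Metric.closedBall_subset_closedBall hr hx)).trans hε⟩

lemma UCBM.exists_isLoc_of_upsilon_lt {G H : Type*} [Monoid G] [MetricSpace G] [Monoid H]
    [MetricSpace H] {ε : ℝ} (hε : 0 < ε) (hε2 : ε ≤ Real.sqrt 2 / 2) (h : Upsilon G H < ε) :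
    ∃ (ς : G → H) (κ : H → G), IsLocAlmostIsoIso ς κ ε (1 / ε) := by
  rw [Upsilon] at h
  have hne : ({ε : ℝ | 0 < ε ∧ ∃ (ς : G → H) (κ : H → G), IsLocAlmostIsoIso ς κ ε (1 / ε)} ∪
      {Real.sqrt 2 / 2}).Nonempty := ⟨Real.sqrt 2 / 2, Set.mem_union_right _ rfl⟩
  obtain ⟨a, ha, haε⟩ := exists_lt_of_csInf_lt hne h
  rcases ha with ⟨ha0, ς, κ, hiso⟩ | ha
  · exact ⟨ς, κ, UCBM.isLoc_mono hiso haε.le (one_div_le_one_div_of_le ha0 haε.le)⟩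
  · rw [Set.mem_singleton_iff] at ha
    exact absurd (ha ▸ haε) (not_lt.2 hε2)

noncomputable def UCBM.eSeq (k : ℕ) : ℝ := (1 / 2 : ℝ) ^ (k + 1)

namespace UCBM

lemma eSeq_pos (k : ℕ) : 0 < eSeq k := by unfold eSeq; positivity

lemma eSeq_anti {k j : ℕ} (h : k ≤ j) : eSeq j ≤ eSeq k :=
  pow_le_pow_of_le_one (by norm_num) (by norm_num) (by omega)

lemma eSeq_le_one (k : ℕ) : eSeq k ≤ 1 := by
  have := eSeq_anti (Nat.zero_le k)
  have h0 : eSeq 0 = 1 / 2 := by norm_num [eSeq]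
  linarith

lemma eSeq_le_sqrt (k : ℕ) : eSeq k ≤ Real.sqrt 2 / 2 := by
  have h1 : (1 : ℝ) ≤ Real.sqrt 2 := by
    nlinarith [Real.sq_sqrt (by norm_num : (0:ℝ) ≤ 2), Real.sqrt_nonneg 2]
  have := eSeq_anti (Nat.zero_le k)
  have h0 : eSeq 0 = 1 / 2 := by norm_num [eSeq]
  linarith

lemma tendsto_eSeq : Tendsto eSeq atTop (nhds 0) := by
  have h := tendsto_pow_atTop_nhds_zero_of_lt_one (by norm_num : (0:ℝ) ≤ 1/2) (by norm_num)
  exact h.comp (tendsto_add_atTop_nat 1)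

lemma tendsto_one_div_eSeq : Tendsto (fun k => 1 / eSeq k) atTop atTop := by
  have h : Tendsto eSeq atTop (nhdsWithin 0 (Set.Ioi 0)) :=
    tendsto_nhdsWithin_iff.2 ⟨tendsto_eSeq, Eventually.of_forall fun k => eSeq_pos k⟩
  simpa [one_div, Pi.inv_def] using h.inv_tendsto_nhdsGT_zero

lemma exists_eSeq (a b : ℝ) (ha : 0 < a) : ∃ k, eSeq k ≤ a ∧ b ≤ 1 / eSeq k := by
  have h1 := tendsto_eSeq.eventually_le_const ha
  have h2 := tendsto_one_div_eSeq.eventually_ge_atTop b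
  exact (h1.and h2).exists

end UCBM

/-- Sequences that are bounded along the ultrafilter `U`. -/
structure UCBM.BSeq (G : ℕ → Type) [∀ n, Monoid (G n)] [∀ n, MetricSpace (G n)]
    (U : Ultrafilter ℕ) : Type where
  toFun : ∀ n, G n
  bounded' : ∃ C, ∀ᶠ m in (U : Filter ℕ), dist (1 : G m) (toFun m) ≤ C

lemma UCBM.BSeq.ext'' {G : ℕ → Type} [∀ n, Monoid (G n)] [∀ n, MetricSpace (G n)]
    {U : Ultrafilter ℕ} {x y : UCBM.BSeq G U} (h : x.toFun = y.toFun) : x = y := by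
  cases x; cases y; cases h; rfl

open Filter Metric Topology UCBM in
/-- A Cauchy sequence, for the Gromov-Hausdorff monoid distance `Υ`,
of proper metric monoids with bi-invariant metrics converges for `Υ` to some proper
metric monoid. -/
theorem upsilon_cauchy_biinvariant_monoids_convergence
    (G : ℕ → Type) [∀ n, Monoid (G n)] [∀ n, MetricSpace (G n)]
    (h_left : ∀ n, ∀ g h k : G n, dist (g * h) (g * k) = dist h k)
    (h_right : ∀ n, ∀ g h k : G n, dist (h * g) (k * g) = dist h k)
    (h_cont : ∀ n, Continuous fun p : G n × G n => p.1 * p.2)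
    (h_proper : ∀ n, ProperSpace (G n))
    (h_cauchy : ∀ ε : ℝ, 0 < ε → ∃ N : ℕ, ∀ m, N ≤ m → ∀ n, N ≤ n →
      Upsilon (G m) (G n) < ε) :
    ∃ (H : Type) (_ : Monoid H) (_ : MetricSpace H),
      (∀ g h k : H, dist (g * h) (g * k) = dist h k) ∧
      (Continuous fun p : H × H => p.1 * p.2) ∧
      ProperSpace H ∧
      Filter.Tendsto (fun n => Upsilon (G n) H) Filter.atTop (nhds 0) := by
  classical
  -- Step A : scales and thresholds
  obtain ⟨N₀, hN₀⟩ : ∃ N₀ : ℕ → ℕ, ∀ k, ∀ m, N₀ k ≤ m → ∀ n, N₀ k ≤ n →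
      Upsilon (G m) (G n) < eSeq k :=
    ⟨fun k => (h_cauchy (eSeq k) (eSeq_pos k)).choose,
     fun k => (h_cauchy (eSeq k) (eSeq_pos k)).choose_spec⟩
  set N : ℕ → ℕ := fun k => k + (Finset.range (k + 1)).sup N₀ with hNdef
  have hNmono : Monotone N := fun a b hab =>
    add_le_add hab (Finset.sup_mono (Finset.range_subset_range.2 (by omega)))
  have hNk : ∀ k, N₀ k ≤ N k := fun k =>
    (Finset.le_sup (Finset.self_mem_range_succ k)).trans (Nat.le_add_left _ _)
  have hNge : ∀ k, k ≤ N k := fun k => Nat.le_add_right _ _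
  have hUps : ∀ k m n, N k ≤ m → N k ≤ n → Upsilon (G m) (G n) < eSeq k :=
    fun k m n hm hn => hN₀ k m ((hNk k).trans hm) n ((hNk k).trans hn)
  set lvl : ℕ → ℕ := fun n => Nat.findGreatest (fun k => N k ≤ n) n with hlvldef
  have lvl_ge : ∀ k n, N k ≤ n → k ≤ lvl n :=
    fun k n h => Nat.le_findGreatest ((hNge k).trans h) h
  have lvl_spec : ∀ n, N 0 ≤ n → N (lvl n) ≤ n :=
    fun n h => Nat.findGreatest_spec (P := fun k => N k ≤ n) (Nat.zero_le n) h
  -- Step B : choice of almost isomorphisms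
  have key : ∀ n m : ℕ, ∃ (σ : G n → G m) (κ : G m → G n), σ 1 = 1 ∧ κ 1 = 1 ∧
      (N 0 ≤ n → N 0 ≤ m → IsLocAlmostIsoIso σ κ (eSeq (min (lvl n) (lvl m)))
        (1 / eSeq (min (lvl n) (lvl m)))) := by
    intro n m
    by_cases h : N 0 ≤ n ∧ N 0 ≤ m
    · have h1 : Upsilon (G n) (G m) < eSeq (min (lvl n) (lvl m)) :=
        hUps _ n m ((hNmono (min_le_left _ _)).trans (lvl_spec n h.1))
          ((hNmono (min_le_right _ _)).trans (lvl_spec m h.2))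
      obtain ⟨ς, κ, hiso⟩ := exists_isLoc_of_upsilon_lt (eSeq_pos _) (eSeq_le_sqrt _) h1
      exact ⟨ς, κ, hiso.1, hiso.2.1, fun _ _ => hiso⟩
    · exact ⟨fun _ => 1, fun _ => 1, rfl, rfl, fun h1 h2 => absurd ⟨h1, h2⟩ h⟩
  choose σ κ hσ1 hκ1 hiso using key
  have iso_k : ∀ k n m, N k ≤ n → N k ≤ m →
      IsLocAlmostIsoIso (σ n m) (κ n m) (eSeq k) (1 / eSeq k) := by
    intro k n m hn hm
    have h0n : N 0 ≤ n := (hNmono (Nat.zero_le k)).trans hn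
    have h0m : N 0 ≤ m := (hNmono (Nat.zero_le k)).trans hm
    have hk : k ≤ min (lvl n) (lvl m) := le_min (lvl_ge k n hn) (lvl_ge k m hm)
    exact isLoc_mono (hiso n m h0n h0m) (eSeq_anti hk)
      (one_div_le_one_div_of_le (eSeq_pos _) (eSeq_anti hk))
  -- Step C : ultrafilter
  obtain ⟨U, hU⟩ := Filter.exists_ultrafilter_le (Filter.atTop : Filter ℕ)
  have hUev : ∀ a : ℕ, ∀ᶠ m in (U : Filter ℕ), a ≤ m := fun a => hU (eventually_ge_atTop a)
  -- Step D : the bounded-sequence monoid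
  have dist_one_mul : ∀ n (a b : G n), dist (1 : G n) (a * b) ≤ dist 1 a + dist 1 b := by
    intro n a b
    have h2 : dist a (a * b) = dist (1 : G n) b := by
      have := h_left n a 1 b
      rwa [mul_one] at this
    calc dist (1 : G n) (a * b) ≤ dist 1 a + dist a (a * b) := dist_triangle _ _ _
      _ = dist 1 a + dist 1 b := by rw [h2]
  letI : One (BSeq G U) := ⟨⟨fun _ => 1, ⟨0, Eventually.of_forall fun m => by simp⟩⟩⟩
  letI : Mul (BSeq G U) := ⟨fun x y => ⟨fun m => x.toFun m * y.toFun m, by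
    obtain ⟨Ca, hCa⟩ := x.bounded'
    obtain ⟨Cb, hCb⟩ := y.bounded'
    exact ⟨Ca + Cb, (hCa.and hCb).mono fun m hm =>
      (dist_one_mul m _ _).trans (add_le_add hm.1 hm.2)⟩⟩⟩
  have mul_toFun : ∀ (x y : BSeq G U) (m : ℕ), (x * y).toFun m = x.toFun m * y.toFun m :=
    fun _ _ _ => rfl
  have one_toFun : ∀ m, (1 : BSeq G U).toFun m = 1 := fun _ => rfl
  letI : Monoid (BSeq G U) :=
    { mul_assoc := fun x y z => BSeq.ext'' (funext fun m => mul_assoc _ _ _)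
      one_mul := fun x => BSeq.ext'' (funext fun m => one_mul _)
      mul_one := fun x => BSeq.ext'' (funext fun m => mul_one _) }
  -- Step E : the metric
  have exD : ∀ x y : BSeq G U, ∃ L,
      Tendsto (fun m => dist (x.toFun m) (y.toFun m)) (U : Filter ℕ) (nhds L) := by
    intro x y
    obtain ⟨Cx, hCx⟩ := x.bounded'
    obtain ⟨Cy, hCy⟩ := y.bounded'
    refine ulim_exists' U _ (0 : ℝ) (Cx + Cy) ?_
    filter_upwards [hCx, hCy] with m h1 h2
    have h3 : dist (x.toFun m) (y.toFun m) ≤ Cx + Cy := by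
      calc dist (x.toFun m) (y.toFun m)
          ≤ dist (x.toFun m) (1 : G m) + dist (1 : G m) (y.toFun m) := dist_triangle _ _ _
        _ ≤ Cx + Cy := by rw [dist_comm]; exact add_le_add h1 h2
    rw [Metric.mem_closedBall, Real.dist_eq, sub_zero, abs_of_nonneg dist_nonneg]
    exact h3
  set D : BSeq G U → BSeq G U → ℝ :=
    fun x y => ulim U 0 (fun m => dist (x.toFun m) (y.toFun m)) with hDdef
  have hDt : ∀ x y : BSeq G U,
      Tendsto (fun m => dist (x.toFun m) (y.toFun m)) (U : Filter ℕ) (nhds (D x y)) :=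
    fun x y => tendsto_ulim (exD x y) 0
  haveI : (U : Filter ℕ).NeBot := U.neBot
  letI : PseudoMetricSpace (BSeq G U) :=
    { dist := D
      dist_self := fun x => tendsto_nhds_unique (hDt x x) (by simpa using tendsto_const_nhds)
      dist_comm := fun x y => tendsto_nhds_unique (hDt x y)
        (by simpa [dist_comm] using hDt y x)
      dist_triangle := fun x y z => le_of_tendsto_of_tendsto' (hDt x z)
        ((hDt x y).add (hDt y z)) fun m => dist_triangle _ _ _ }
  have hdist : ∀ x y : BSeq G U,
      Tendsto (fun m => dist (x.toFun m) (y.toFun m)) (U : Filter ℕ) (nhds (dist x y)) := hDt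
  -- Step F : multiplication is Lipschitz
  have mul_dist : ∀ x y x' y' : BSeq G U,
      dist (x * y) (x' * y') ≤ dist x x' + dist y y' := by
    intro x y x' y'
    refine le_of_tendsto_of_tendsto' (hdist (x * y) (x' * y'))
      ((hdist x x').add (hdist y y')) fun m => ?_
    calc dist ((x * y).toFun m) ((x' * y').toFun m)
        = dist (x.toFun m * y.toFun m) (x'.toFun m * y'.toFun m) := rfl
      _ ≤ dist (x.toFun m * y.toFun m) (x'.toFun m * y.toFun m)
          + dist (x'.toFun m * y.toFun m) (x'.toFun m * y'.toFun m) := dist_triangle _ _ _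
      _ = dist (x.toFun m) (x'.toFun m) + dist (y.toFun m) (y'.toFun m) := by
          rw [h_right m, h_left m]
  letI : ContinuousMul (BSeq G U) := by
    refine ⟨LipschitzWith.continuous (K := 2) (LipschitzWith.of_dist_le_mul fun p q => ?_)⟩
    have h1 : dist p.1 q.1 ≤ dist p q := by rw [Prod.dist_eq]; exact le_max_left _ _
    have h2 : dist p.2 q.2 ≤ dist p q := by rw [Prod.dist_eq]; exact le_max_right _ _
    have h3 : dist (p.1 * p.2) (q.1 * q.2) ≤ dist p.1 q.1 + dist p.2 q.2 :=
      mul_dist p.1 p.2 q.1 q.2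
    have h4 : ((2 : NNReal) : ℝ) * dist p q = 2 * dist p q := by norm_num
    calc dist (p.1 * p.2) (q.1 * q.2) ≤ dist p.1 q.1 + dist p.2 q.2 := h3
      _ ≤ ((2 : NNReal) : ℝ) * dist p q := by rw [h4]; linarith
  -- shared facts on the quotient
  have dist_one_mk : ∀ x : BSeq G U,
      dist (1 : SeparationQuotient (BSeq G U)) (SeparationQuotient.mk x) = dist 1 x :=
    fun x => by rw [← SeparationQuotient.mk_one, SeparationQuotient.dist_mk]
  have hball : ∀ (x : BSeq G U) (R : ℝ),
      dist (1 : SeparationQuotient (BSeq G U)) (SeparationQuotient.mk x) ≤ R →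
      ∀ᶠ m in (U : Filter ℕ), dist (1 : G m) (x.toFun m) ≤ R + 1 := by
    intro x R hx
    rw [dist_one_mk] at hx
    have ht : Tendsto (fun m => dist ((1 : BSeq G U).toFun m) (x.toFun m)) (U : Filter ℕ)
        (nhds (dist (1 : BSeq G U) x)) := hdist 1 x
    exact ht.eventually_le_const (lt_of_le_of_lt hx (lt_add_one R))
  have σ_bound : ∀ k n m, N k ≤ n → N k ≤ m → ∀ g : G n, dist g 1 ≤ 1 / eSeq k →
      dist (σ n m g) (1 : G m) ≤ dist g (1 : G n) + eSeq k := by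
    intro k n m hn hm g hg
    have hr0 : (0:ℝ) ≤ 1 / eSeq k := by have := eSeq_pos k; positivity
    have h3 := (iso_k k n m hn hm).2.2.1 g (Metric.mem_closedBall.2 hg) 1
      (Metric.mem_closedBall_self hr0) 1 (Metric.mem_closedBall_self hr0)
    rw [hσ1, hκ1, mul_one, mul_one] at h3
    have h4 := abs_le.1 h3
    linarith [h4.1, h4.2]
  have κ_bound : ∀ k n m, N k ≤ n → N k ≤ m → ∀ x : G m, dist x 1 ≤ 1 / eSeq k →
      dist (κ n m x) (1 : G n) ≤ dist x (1 : G m) + eSeq k := by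
    intro k n m hn hm x hx
    have hr0 : (0:ℝ) ≤ 1 / eSeq k := by have := eSeq_pos k; positivity
    have h3 := (iso_k k n m hn hm).2.2.2 x (Metric.mem_closedBall.2 hx) 1
      (Metric.mem_closedBall_self hr0) 1 (Metric.mem_closedBall_self hr0)
    rw [hκ1, hσ1, mul_one, mul_one] at h3
    have h4 := abs_le.1 h3
    linarith [h4.1, h4.2]
  have σ_mem : ∀ k n, N k ≤ n → ∀ g : G n, dist g 1 ≤ 1 / eSeq k →
      ∃ C, ∀ᶠ m in (U : Filter ℕ), dist (1 : G m) (σ n m g) ≤ C := by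
    intro k n hn g hg
    refine ⟨dist g (1 : G n) + 1, ?_⟩
    filter_upwards [hUev (N k)] with m hm
    have := σ_bound k n m hn hm g hg
    rw [dist_comm]
    linarith [eSeq_le_one k]
  have κlim_ex : ∀ k n, N k ≤ n → ∀ (x : BSeq G U) (R : ℝ),
      dist (1 : SeparationQuotient (BSeq G U)) (SeparationQuotient.mk x) ≤ R →
      R + 1 ≤ 1 / eSeq k →
      ∃ p, Tendsto (fun m => κ n m (x.toFun m)) (U : Filter ℕ) (nhds p) := by
    intro k n hn x R hx hR
    haveI := h_proper n
    refine ulim_exists' U _ (1 : G n) (R + 2) ?_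
    filter_upwards [hball x R hx, hUev (N k)] with m h1 hm
    have h2 := κ_bound k n m hn hm (x.toFun m) (by rw [dist_comm]; exact h1.trans hR)
    rw [Metric.mem_closedBall]
    have h3 : dist (x.toFun m) (1 : G m) ≤ R + 1 := by rw [dist_comm]; exact h1
    linarith [eSeq_le_one k]
  have lim3 : ∀ k n, N k ≤ n → ∀ g g' : G n, dist g 1 ≤ 1 / eSeq k → dist g' 1 ≤ 1 / eSeq k →
      ∀ (x : BSeq G U) (R : ℝ),
      dist (1 : SeparationQuotient (BSeq G U)) (SeparationQuotient.mk x) ≤ R →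
      R + 1 ≤ 1 / eSeq k →
      ∀ p : G n, Tendsto (fun m => κ n m (x.toFun m)) (U : Filter ℕ) (nhds p) →
      ∀ d : ℝ, Tendsto (fun m => dist (σ n m g * σ n m g') (x.toFun m)) (U : Filter ℕ)
        (nhds d) →
      |d - dist (g * g') p| ≤ eSeq k := by
    intro k n hn g g' hg hg' x R hx hR p hp d hd
    have hB : Tendsto (fun m => dist (g * g') (κ n m (x.toFun m))) (U : Filter ℕ)
        (nhds (dist (g * g') p)) := tendsto_const_nhds.dist hp
    refine le_of_tendsto ((hd.sub hB).abs) ?_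
    filter_upwards [hUev (N k), hball x R hx] with m hm hxm
    exact (iso_k k n m hn hm).2.2.1 g (Metric.mem_closedBall.2 hg) g'
      (Metric.mem_closedBall.2 hg') (x.toFun m)
      (Metric.mem_closedBall.2 (by rw [dist_comm]; exact hxm.trans hR))
  have lim4 : ∀ k n, N k ≤ n → ∀ (x y : BSeq G U) (R : ℝ),
      dist (1 : SeparationQuotient (BSeq G U)) (SeparationQuotient.mk x) ≤ R →
      dist (1 : SeparationQuotient (BSeq G U)) (SeparationQuotient.mk y) ≤ R →
      R + 1 ≤ 1 / eSeq k →
      ∀ h : G n, dist h 1 ≤ 1 / eSeq k →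
      ∀ px py : G n, Tendsto (fun m => κ n m (x.toFun m)) (U : Filter ℕ) (nhds px) →
        Tendsto (fun m => κ n m (y.toFun m)) (U : Filter ℕ) (nhds py) →
      ∀ d : ℝ, Tendsto (fun m => dist (x.toFun m * y.toFun m) (σ n m h)) (U : Filter ℕ)
        (nhds d) →
      |dist (px * py) h - d| ≤ eSeq k := by
    intro k n hn x y R hx hy hR h hh px py hpx hpy d hd
    haveI : ContinuousMul (G n) := ⟨h_cont n⟩
    have hA : Tendsto (fun m => dist (κ n m (x.toFun m) * κ n m (y.toFun m)) h)
        (U : Filter ℕ) (nhds (dist (px * py) h)) := (hpx.mul hpy).dist tendsto_const_nhds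
    refine le_of_tendsto ((hA.sub hd).abs) ?_
    filter_upwards [hUev (N k), hball x R hx, hball y R hy] with m hm hxm hym
    exact (iso_k k n m hn hm).2.2.2 (x.toFun m)
      (Metric.mem_closedBall.2 (by rw [dist_comm]; exact hxm.trans hR)) (y.toFun m)
      (Metric.mem_closedBall.2 (by rw [dist_comm]; exact hym.trans hR)) h
      (Metric.mem_closedBall.2 hh)
  -- The limit space
  refine ⟨SeparationQuotient (BSeq G U), inferInstance, inferInstance, ?_, ?_, ?_, ?_⟩
  · -- left invariance
    intro g h k
    obtain ⟨a, rfl⟩ := SeparationQuotient.surjective_mk g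
    obtain ⟨b, rfl⟩ := SeparationQuotient.surjective_mk h
    obtain ⟨c, rfl⟩ := SeparationQuotient.surjective_mk k
    rw [← SeparationQuotient.mk_mul, ← SeparationQuotient.mk_mul,
      SeparationQuotient.dist_mk, SeparationQuotient.dist_mk]
    refine tendsto_nhds_unique (hdist (a * b) (a * c)) ?_
    have heq : ∀ m, dist ((a * b).toFun m) ((a * c).toFun m) = dist (b.toFun m) (c.toFun m) :=
      fun m => h_left m (a.toFun m) (b.toFun m) (c.toFun m)
    exact Tendsto.congr (fun m => (heq m).symm) (hdist b c)
  · exact continuous_mul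
  · -- properness
    haveI hcomplete : CompleteSpace (SeparationQuotient (BSeq G U)) := by
      apply Metric.complete_of_convergent_controlled_sequences (fun i => (1/2 : ℝ)^i)
        (fun i => by positivity)
      intro u hu
      choose v hv using fun i => SeparationQuotient.surjective_mk (u i)
      set P : ℕ → ℕ → Prop := fun i m =>
        (∀ j ≤ i, ∀ l ≤ i,
          |dist ((v j).toFun m) ((v l).toFun m) - dist (u j) (u l)| ≤ (1/2 : ℝ)^i) ∧ i ≤ m
        with hPdef
      have hPU : ∀ i, ∀ᶠ m in (U : Filter ℕ), P i m := by
        intro i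
        refine Eventually.and ?_ (hUev i)
        have hfin : ∀ᶠ m in (U : Filter ℕ), ∀ j ∈ Finset.range (i+1), ∀ l ∈ Finset.range (i+1),
            |dist ((v j).toFun m) ((v l).toFun m) - dist (u j) (u l)| ≤ (1/2 : ℝ)^i := by
          rw [Filter.eventually_all_finset]
          intro j hj
          rw [Filter.eventually_all_finset]
          intro l hl
          have hd : Tendsto (fun m => dist ((v j).toFun m) ((v l).toFun m)) (U : Filter ℕ)
              (nhds (dist (u j) (u l))) := by
            rw [← hv j, ← hv l, SeparationQuotient.dist_mk]
            exact hdist _ _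
          have h2 : Tendsto
              (fun m => |dist ((v j).toFun m) ((v l).toFun m) - dist (u j) (u l)|)
              (U : Filter ℕ) (nhds 0) := by
            have h3 : Tendsto
                (fun m => dist ((v j).toFun m) ((v l).toFun m) - dist (u j) (u l))
                (U : Filter ℕ) (nhds (dist (u j) (u l) - dist (u j) (u l))) :=
              hd.sub tendsto_const_nhds
            rw [sub_self] at h3
            simpa using h3.abs
          exact h2.eventually_le_const (by positivity)
        exact hfin.mono fun m hm j hj l hl =>
          hm j (Finset.mem_range.2 (by omega)) l (Finset.mem_range.2 (by omega))
      set idx : ℕ → ℕ := fun m => Nat.findGreatest (fun i => P i m) m with hidxdef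
      have hidx_ge : ∀ i m, P i m → i ≤ idx m := fun i m h => Nat.le_findGreatest h.2 h
      have hidx_spec : ∀ i m, P i m → P (idx m) m := by
        intro i m h
        by_cases h0 : idx m = 0
        · have hi0 : i = 0 := by have := hidx_ge i m h; omega
          rw [hidxdef] at h0 ⊢
          rw [h0]
          rwa [hi0] at h
        · simp only [hidxdef] at h0 ⊢
          exact Nat.findGreatest_of_ne_zero (P := fun i => P i m) (n := m) rfl h0
      have hwB : ∃ C, ∀ᶠ m in (U : Filter ℕ),
          dist (1 : G m) ((v (idx m)).toFun m) ≤ C := by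
        obtain ⟨C0, hC0⟩ := (v 0).bounded'
        refine ⟨C0 + 2, ?_⟩
        filter_upwards [hC0, hPU 0] with m h1 hP0
        have h2 : dist ((v 0).toFun m) ((v (idx m)).toFun m) ≤ 2 := by
          by_cases h0 : idx m = 0
          · rw [h0]
            simp
          · have hPi := hidx_spec 0 m hP0
            have h3 := hPi.1 0 (Nat.zero_le _) (idx m) le_rfl
            have h4 : dist (u 0) (u (idx m)) < (1/2 : ℝ)^0 :=
              hu 0 0 (idx m) le_rfl (Nat.zero_le _)
            have h5 : ((1:ℝ)/2)^(idx m) ≤ 1 := pow_le_one₀ (by norm_num) (by norm_num)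
            have h6 := abs_le.1 h3
            norm_num at h4
            linarith [h6.1, h6.2]
        calc dist (1 : G m) ((v (idx m)).toFun m)
            ≤ dist (1 : G m) ((v 0).toFun m) + dist ((v 0).toFun m) ((v (idx m)).toFun m) :=
              dist_triangle _ _ _
          _ ≤ C0 + 2 := add_le_add h1 h2
      refine ⟨SeparationQuotient.mk ⟨fun m => (v (idx m)).toFun m, hwB⟩, ?_⟩
      rw [tendsto_iff_dist_tendsto_zero]
      refine squeeze_zero (fun j => dist_nonneg) (g := fun j => (1/2:ℝ)^j) ?_ ?_
      · intro j
        refine UCBM.le_of_forall_pos_le_add' fun δ hδ => ?_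
        obtain ⟨i0, hi0⟩ := exists_pow_lt_of_lt_one hδ (by norm_num : (1:ℝ)/2 < 1)
        have hji : j ≤ max j i0 := le_max_left _ _
        have hiδ : ((1:ℝ)/2)^(max j i0) < δ :=
          lt_of_le_of_lt (pow_le_pow_of_le_one (by norm_num) (by norm_num)
            (le_max_right _ _)) hi0
        have hdju : Tendsto
            (fun m => dist ((v j).toFun m) ((v (idx m)).toFun m)) (U : Filter ℕ)
            (nhds (dist (u j)
              (SeparationQuotient.mk ⟨fun m => (v (idx m)).toFun m, hwB⟩))) := by
          rw [← hv j, SeparationQuotient.dist_mk]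
          exact hdist _ _
        refine le_of_tendsto hdju ?_
        filter_upwards [hPU (max j i0)] with m hPm
        have hi_le : max j i0 ≤ idx m := hidx_ge _ m hPm
        have hPidx : P (idx m) m := hidx_spec _ m hPm
        have hjidx : dist (u j) (u (idx m)) < (1/2:ℝ)^j :=
          hu j j (idx m) le_rfl (hji.trans hi_le)
        have hco := hPidx.1 j (hji.trans hi_le) (idx m) le_rfl
        have hpow : ((1:ℝ)/2)^(idx m) ≤ (1/2:ℝ)^(max j i0) :=
          pow_le_pow_of_le_one (by norm_num) (by norm_num) hi_le
        have h6 := abs_le.1 hco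
        linarith [h6.1, h6.2]
      · exact tendsto_pow_atTop_nhds_zero_of_lt_one (by norm_num) (by norm_num)
    have hTB : ∀ R : ℝ, 0 ≤ R →
        TotallyBounded (Metric.closedBall (1 : SeparationQuotient (BSeq G U)) R) := by
      intro R hR
      rw [Metric.totallyBounded_iff]
      intro ε0 hε0
      obtain ⟨k, hk1, hk2⟩ := exists_eSeq (min (ε0/4) 1) (R + 3) (by positivity)
      have hk1a : eSeq k ≤ ε0/4 := hk1.trans (min_le_left _ _)
      have hk1b : eSeq k ≤ 1 := hk1.trans (min_le_right _ _)
      have hR1 : R + 1 ≤ 1 / eSeq k := by linarith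
      have hR2 : R + 2 ≤ 1 / eSeq k := by linarith
      haveI := h_proper (N k)
      have hcomp : IsCompact (Metric.closedBall (1 : G (N k)) (R+2)) :=
        isCompact_closedBall _ _
      have hcover : Metric.closedBall (1 : G (N k)) (R+2) ⊆
          ⋃ s ∈ Metric.closedBall (1 : G (N k)) (R+2), Metric.ball s (ε0/4) :=
        fun s hs => Set.mem_biUnion hs (Metric.mem_ball_self (by positivity))
      obtain ⟨t, hts, htfin, htcov⟩ :=
        hcomp.elim_finite_subcover_image (fun s _ => isOpen_ball) hcover
      set F : G (N k) → SeparationQuotient (BSeq G U) := fun s =>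
        if hs : dist s (1 : G (N k)) ≤ 1 / eSeq k then
          SeparationQuotient.mk ⟨fun m => σ (N k) m s, σ_mem k (N k) le_rfl s hs⟩ else 1
        with hFdef
      refine ⟨F '' t, htfin.image F, ?_⟩
      rintro h hh
      obtain ⟨x, rfl⟩ := SeparationQuotient.surjective_mk h
      rw [Metric.mem_closedBall, dist_comm] at hh
      obtain ⟨p, hp⟩ := κlim_ex k (N k) le_rfl x R hh hR1
      have hpK : p ∈ Metric.closedBall (1 : G (N k)) (R+2) := by
        have ht2 : Tendsto (fun m => dist (κ (N k) m (x.toFun m)) (1 : G (N k)))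
            (U : Filter ℕ) (nhds (dist p 1)) := hp.dist tendsto_const_nhds
        rw [Metric.mem_closedBall]
        refine le_of_tendsto ht2 ?_
        filter_upwards [hball x R hh, hUev (N k)] with m h1 hm
        have h2 := κ_bound k (N k) m le_rfl hm (x.toFun m)
          (by rw [dist_comm]; exact h1.trans hR1)
        have h3 : dist (x.toFun m) (1 : G m) ≤ R + 1 := by rw [dist_comm]; exact h1
        linarith [eSeq_le_one k]
      obtain ⟨s, hst, hsp⟩ := Set.mem_iUnion₂.1 (htcov hpK)
      have hsK : dist s (1 : G (N k)) ≤ R + 2 := by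
        have := hts hst
        rwa [Metric.mem_closedBall] at this
      have hsK' : dist s (1 : G (N k)) ≤ 1 / eSeq k := hsK.trans hR2
      refine Set.mem_biUnion (Set.mem_image_of_mem F hst) ?_
      rw [Metric.mem_ball]
      have hFs : F s = SeparationQuotient.mk
          ⟨fun m => σ (N k) m s, σ_mem k (N k) le_rfl s hsK'⟩ := by
        simp only [hFdef]
        rw [dif_pos hsK']
      have hd : Tendsto (fun m => dist (σ (N k) m s * σ (N k) m 1) (x.toFun m))
          (U : Filter ℕ)
          (nhds (dist (⟨fun m => σ (N k) m s, σ_mem k (N k) le_rfl s hsK'⟩ : BSeq G U) x)) := by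
        refine Tendsto.congr (fun m => ?_) (hdist _ x)
        rw [hσ1, mul_one]
      have hlim := lim3 k (N k) le_rfl s 1 hsK'
        (by rw [dist_self]; have := eSeq_pos k; positivity) x R hh hR1 p hp _ hd
      rw [mul_one] at hlim
      have hsp' : dist s p < ε0/4 := by
        rw [Metric.mem_ball] at hsp
        rw [dist_comm]
        exact hsp
      have habs := abs_le.1 hlim
      rw [dist_comm, hFs, SeparationQuotient.dist_mk]
      linarith [habs.1, habs.2]
    refine ⟨fun c r => ?_⟩
    have hsub : Metric.closedBall c r ⊆
        Metric.closedBall (1 : SeparationQuotient (BSeq G U))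
          (|r| + dist c (1 : SeparationQuotient (BSeq G U))) := by
      intro y hy
      rw [Metric.mem_closedBall] at hy ⊢
      calc dist y 1 ≤ dist y c + dist c 1 := dist_triangle _ _ _
        _ ≤ |r| + dist c 1 := add_le_add (hy.trans (le_abs_self r)) le_rfl
    exact IsCompact.of_isClosed_subset
      (TotallyBounded.isCompact_of_isClosed
        (hTB _ (add_nonneg (abs_nonneg r) dist_nonneg)) Metric.isClosed_closedBall)
      Metric.isClosed_closedBall hsub
  · -- convergence of `Upsilon`
    rw [Metric.tendsto_atTop]
    intro ε0 hε0
    obtain ⟨k, hk1, hk2⟩ := exists_eSeq (min (ε0/6) 1) (1/(ε0/2) + 2) (by positivity)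
    have hk1a : eSeq k ≤ ε0/6 := hk1.trans (min_le_left _ _)
    have hk1b : eSeq k ≤ 1 := hk1.trans (min_le_right _ _)
    have hr0 : (0:ℝ) < 1/(ε0/2) := by positivity
    have hrk : 1/(ε0/2) + 1 ≤ 1/eSeq k := by linarith
    have hrk' : 1/(ε0/2) ≤ 1/eSeq k := by linarith
    have h1e : (1:ℝ) ≤ 1/eSeq k := by
      rw [le_div_iff₀ (eSeq_pos k), one_mul]
      exact eSeq_le_one k
    refine ⟨N k, fun n hn => ?_⟩
    rw [Real.dist_eq, sub_zero, abs_of_nonneg (upsilon_nonneg _ _)]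
    have hup : Upsilon (G n) (SeparationQuotient (BSeq G U)) ≤ ε0/2 := by
      refine upsilon_le (by positivity) ?_
      haveI := h_proper n
      set rep : SeparationQuotient (BSeq G U) → BSeq G U :=
        fun h => (SeparationQuotient.surjective_mk h).choose with hrepdef
      have hrep : ∀ h, SeparationQuotient.mk (rep h) = h :=
        fun h => (SeparationQuotient.surjective_mk h).choose_spec
      set ςn : G n → SeparationQuotient (BSeq G U) := fun g =>
        if hg : dist g (1 : G n) ≤ 1/eSeq k then
          SeparationQuotient.mk ⟨fun m => σ n m g, σ_mem k n hn g hg⟩ else 1 with hςdef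
      set κr : SeparationQuotient (BSeq G U) → G n := fun h =>
        ulim U 1 (fun m => κ n m ((rep h).toFun m)) with hκrdef
      set κn : SeparationQuotient (BSeq G U) → G n := fun h =>
        if h = 1 then 1 else κr h with hκndef
      have hκrt : ∀ h, dist h (1 : SeparationQuotient (BSeq G U)) ≤ 1/(ε0/2) →
          Tendsto (fun m => κ n m ((rep h).toFun m)) (U : Filter ℕ) (nhds (κr h)) := by
        intro h hh
        have hx : dist (1 : SeparationQuotient (BSeq G U))
            (SeparationQuotient.mk (rep h)) ≤ 1/(ε0/2) := by
          rw [hrep, dist_comm]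
          exact hh
        exact tendsto_ulim (κlim_ex k n hn (rep h) (1/(ε0/2)) hx hrk) 1
      have hκd : ∀ h, dist h (1 : SeparationQuotient (BSeq G U)) ≤ 1/(ε0/2) →
          dist (κn h) (κr h) ≤ eSeq k := by
        intro h hh
        by_cases h1 : h = 1
        · subst h1
          have hd0 : Tendsto
              (fun m => dist ((rep (1 : SeparationQuotient (BSeq G U))).toFun m) (1 : G m))
              (U : Filter ℕ) (nhds 0) := by
            have h3 := hdist (rep (1 : SeparationQuotient (BSeq G U))) (1 : BSeq G U)
            have h4 : dist (rep (1 : SeparationQuotient (BSeq G U))) (1 : BSeq G U) = 0 := by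
              rw [← SeparationQuotient.dist_mk, hrep, SeparationQuotient.mk_one, dist_self]
            rwa [h4] at h3
          have ht := hκrt 1 (by rw [dist_self]; exact hr0.le)
          have ht2 : Tendsto
              (fun m => dist (κ n m ((rep (1 : SeparationQuotient (BSeq G U))).toFun m))
                (1 : G n)) (U : Filter ℕ)
              (nhds (dist (κr (1 : SeparationQuotient (BSeq G U))) 1)) :=
            ht.dist tendsto_const_nhds
          have hbound : dist (κr (1 : SeparationQuotient (BSeq G U))) 1 ≤ 0 + eSeq k := by
            refine le_of_tendsto_of_tendsto ht2 (hd0.add tendsto_const_nhds) ?_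
            filter_upwards [hUev (N k),
              hd0.eventually_le_const (by norm_num : (0:ℝ) < 1)] with m hm hm1
            exact κ_bound k n m hn hm _ (hm1.trans h1e)
          have hκn1' : κn (1 : SeparationQuotient (BSeq G U)) = 1 := by
            simp [hκndef]
          rw [hκn1', dist_comm]
          linarith
        · simp only [hκndef, if_neg h1, dist_self]
          exact (eSeq_pos k).le
      have hςn1 : ςn 1 = 1 := by
        have h0 : dist (1 : G n) (1 : G n) ≤ 1/eSeq k := by
          rw [dist_self]
          have := eSeq_pos k
          positivity
        simp only [hςdef]
        rw [dif_pos h0]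
        have h5 : (⟨fun m => σ n m 1, σ_mem k n hn 1 h0⟩ : BSeq G U) = 1 :=
          BSeq.ext'' (funext fun m => hσ1 n m)
        rw [h5, SeparationQuotient.mk_one]
      have hκn1 : κn 1 = 1 := by simp [hκndef]
      refine ⟨ςn, κn, hςn1, hκn1, ?_, ?_⟩
      · -- clause 3
        intro g hg g' hg' h hh
        rw [Metric.mem_closedBall] at hg hg' hh
        have hgk : dist g (1 : G n) ≤ 1/eSeq k := hg.trans hrk'
        have hg'k : dist g' (1 : G n) ≤ 1/eSeq k := hg'.trans hrk'
        have hx : dist (1 : SeparationQuotient (BSeq G U))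
            (SeparationQuotient.mk (rep h)) ≤ 1/(ε0/2) := by
          rw [hrep, dist_comm]
          exact hh
        have hp := hκrt h hh
        have hς_eq : ςn g * ςn g' = SeparationQuotient.mk
            ((⟨fun m => σ n m g, σ_mem k n hn g hgk⟩ : BSeq G U) *
              ⟨fun m => σ n m g', σ_mem k n hn g' hg'k⟩) := by
          simp only [hςdef]
          rw [dif_pos hgk, dif_pos hg'k, ← SeparationQuotient.mk_mul]
        have hd : Tendsto (fun m => dist (σ n m g * σ n m g') ((rep h).toFun m))
            (U : Filter ℕ) (nhds (dist (ςn g * ςn g') h)) := by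
          have h7 : dist (ςn g * ςn g') h =
              dist ((⟨fun m => σ n m g, σ_mem k n hn g hgk⟩ : BSeq G U) *
                ⟨fun m => σ n m g', σ_mem k n hn g' hg'k⟩) (rep h) := by
            rw [hς_eq, ← hrep h, SeparationQuotient.dist_mk, hrep]
          rw [h7]
          exact hdist _ _
        have hlim := lim3 k n hn g g' hgk hg'k (rep h) (1/(ε0/2)) hx hrk (κr h) hp _ hd
        have hswap : |dist (g*g') (κn h) - dist (g*g') (κr h)| ≤ eSeq k := by
          have h8 := hκd h hh
          have h9 : |dist (g*g') (κn h) - dist (g*g') (κr h)| ≤ dist (κn h) (κr h) := by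
            rw [dist_comm (g*g') (κn h), dist_comm (g*g') (κr h)]
            exact abs_dist_sub_le _ _ _
          exact h9.trans h8
        calc |dist (ςn g * ςn g') h - dist (g*g') (κn h)|
            ≤ |dist (ςn g * ςn g') h - dist (g*g') (κr h)|
              + |dist (g*g') (κr h) - dist (g*g') (κn h)| := abs_sub_le _ _ _
          _ ≤ eSeq k + eSeq k := add_le_add hlim (by rwa [abs_sub_comm] at hswap)
          _ ≤ ε0/2 := by linarith
      · -- clause 4
        intro x hx y hy h hh
        rw [Metric.mem_closedBall] at hx hy hh
        have hhk : dist h (1 : G n) ≤ 1/eSeq k := hh.trans hrk'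
        have hxm : dist (1 : SeparationQuotient (BSeq G U))
            (SeparationQuotient.mk (rep x)) ≤ 1/(ε0/2) := by
          rw [hrep, dist_comm]
          exact hx
        have hym : dist (1 : SeparationQuotient (BSeq G U))
            (SeparationQuotient.mk (rep y)) ≤ 1/(ε0/2) := by
          rw [hrep, dist_comm]
          exact hy
        have hpx := hκrt x hx
        have hpy := hκrt y hy
        have hς_eq : ςn h = SeparationQuotient.mk
            (⟨fun m => σ n m h, σ_mem k n hn h hhk⟩ : BSeq G U) := by
          simp only [hςdef]
          rw [dif_pos hhk]
        have hd : Tendsto (fun m => dist ((rep x).toFun m * (rep y).toFun m) (σ n m h))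
            (U : Filter ℕ) (nhds (dist (x * y) (ςn h))) := by
          have h7 : dist (x * y) (ςn h) = dist (rep x * rep y)
              (⟨fun m => σ n m h, σ_mem k n hn h hhk⟩ : BSeq G U) := by
            rw [hς_eq, ← hrep x, ← hrep y, ← SeparationQuotient.mk_mul,
              SeparationQuotient.dist_mk, hrep, hrep]
          rw [h7]
          exact hdist _ _
        have hlim := lim4 k n hn (rep x) (rep y) (1/(ε0/2)) hxm hym hrk h hhk
          (κr x) (κr y) hpx hpy _ hd
        have hswap : dist (κn x * κn y) (κr x * κr y) ≤ eSeq k + eSeq k := by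
          calc dist (κn x * κn y) (κr x * κr y)
              ≤ dist (κn x * κn y) (κr x * κn y) + dist (κr x * κn y) (κr x * κr y) :=
                dist_triangle _ _ _
            _ = dist (κn x) (κr x) + dist (κn y) (κr y) := by rw [h_right n, h_left n]
            _ ≤ eSeq k + eSeq k := add_le_add (hκd x hx) (hκd y hy)
        have h9 : |dist (κn x * κn y) h - dist (κr x * κr y) h| ≤ eSeq k + eSeq k :=
          (abs_dist_sub_le (κn x * κn y) (κr x * κr y) h).trans hswap
        calc |dist (κn x * κn y) h - dist (x*y) (ςn h)|
            ≤ |dist (κn x * κn y) h - dist (κr x * κr y) h|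
              + |dist (κr x * κr y) h - dist (x*y) (ςn h)| := abs_sub_le _ _ _
          _ ≤ (eSeq k + eSeq k) + eSeq k := add_le_add h9 hlim
          _ ≤ ε0/2 := by linarith
    linarith
end

section
/- Let (G_n, δ_n)_{n∈ℕ} be a sequence of proper metric groups such that for every n ∈ ℕ the metric δ_n is bi-invariant (both left- and right-invariant), and suppose the sequence is Cauchy for the Gromov-Hausdorff monoid distance Υ. Then there exists a proper metric group (G, δ) such that lim_{n→∞} Υ((G_n,δ_n),(G,δ)) = 0. -/
open Filter Metric Topology Set

namespace Stmt10

section UpsLemmas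
open Filter Metric Topology Set
variable {A B : Type*} [Monoid A] [MetricSpace A] [Monoid B] [MetricSpace B]

lemma iso_mono {ς : A → B} {κ : B → A} {ε ε' r r' : ℝ}
    (h : IsLocAlmostIsoIso ς κ ε r) (hε : ε ≤ ε') (hr : r' ≤ r) :
    IsLocAlmostIsoIso ς κ ε' r' := by
  obtain ⟨h1, h2, h3, h4⟩ := h
  have sub1 : Metric.closedBall (1 : A) r' ⊆ Metric.closedBall (1 : A) r :=
    Metric.closedBall_subset_closedBall hr
  have sub2 : Metric.closedBall (1 : B) r' ⊆ Metric.closedBall (1 : B) r :=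
    Metric.closedBall_subset_closedBall hr
  refine ⟨h1, h2, fun g hg g' hg' x hx => le_trans (h3 g (sub1 hg) g' (sub1 hg') x (sub2 hx)) hε,
    fun g hg g' hg' x hx => le_trans (h4 g (sub2 hg) g' (sub2 hg') x (sub1 hx)) hε⟩

lemma upsilon_mem_nonneg {x : ℝ}
    (hx : x ∈ ({ε : ℝ | 0 < ε ∧ ∃ (ς : A → B) (κ : B → A), IsLocAlmostIsoIso ς κ ε (1 / ε)} ∪
      {Real.sqrt 2 / 2})) : 0 ≤ x := by
  rcases hx with hx | hx
  · exact hx.1.le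
  · rw [Set.mem_singleton_iff] at hx
    rw [hx]; positivity

lemma upsilon_nonneg : 0 ≤ Upsilon A B :=
  Real.sInf_nonneg fun _ hx => upsilon_mem_nonneg hx

lemma upsilon_le {ε : ℝ} (hε : 0 < ε)
    (h : ∃ (ς : A → B) (κ : B → A), IsLocAlmostIsoIso ς κ ε (1 / ε)) :
    Upsilon A B ≤ ε :=
  csInf_le ⟨0, fun _ hx => upsilon_mem_nonneg hx⟩ (Or.inl ⟨hε, h⟩)

lemma exists_of_upsilon_lt {ε : ℝ} (hε : 0 < ε) (hε2 : ε ≤ Real.sqrt 2 / 2)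
    (h : Upsilon A B < ε) :
    ∃ (ς : A → B) (κ : B → A), IsLocAlmostIsoIso ς κ ε (1 / ε) := by
  rw [Upsilon] at h
  obtain ⟨x, hx, hxε⟩ := (csInf_lt_iff ⟨0, fun _ hx => upsilon_mem_nonneg hx⟩
    ⟨Real.sqrt 2 / 2, Or.inr rfl⟩).1 h
  rcases hx with hx | hx
  · obtain ⟨hx0, ς, κ, hiso⟩ := hx
    exact ⟨ς, κ, iso_mono hiso hxε.le (one_div_le_one_div_of_le hx0 hxε.le)⟩
  · rw [Set.mem_singleton_iff] at hx
    exact absurd (hx ▸ hxε) (not_lt.2 hε2)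


lemma one_mem_cb {r : ℝ} (hr : 0 ≤ r) : (1 : A) ∈ Metric.closedBall (1 : A) r := by
  simpa [Metric.mem_closedBall] using hr

lemma iso_norm_fst {ς : A → B} {κ : B → A} {ε r : ℝ} (h : IsLocAlmostIsoIso ς κ ε r)
    (hr : 0 ≤ r) {g : A} (hg : g ∈ Metric.closedBall (1 : A) r) :
    |dist (ς g) 1 - dist g 1| ≤ ε := by
  have := h.2.2.1 g hg 1 (one_mem_cb hr) 1 (one_mem_cb hr)
  simpa [h.1, h.2.1] using this

lemma iso_norm_snd {ς : A → B} {κ : B → A} {ε r : ℝ} (h : IsLocAlmostIsoIso ς κ ε r)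
    (hr : 0 ≤ r) {g : B} (hg : g ∈ Metric.closedBall (1 : B) r) :
    |dist (κ g) 1 - dist g 1| ≤ ε := by
  have := h.2.2.2 g hg 1 (one_mem_cb hr) 1 (one_mem_cb hr)
  simpa [h.1, h.2.1] using this

lemma iso_transfer {ς : A → B} {κ : B → A} {ε r : ℝ} (h : IsLocAlmostIsoIso ς κ ε r)
    (hr : 0 ≤ r) {x : B} (hx : x ∈ Metric.closedBall (1 : B) r)
    {y : A} (hy : y ∈ Metric.closedBall (1 : A) r) :
    |dist (κ x) y - dist x (ς y)| ≤ ε := by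
  have := h.2.2.2 x hx 1 (one_mem_cb hr) y hy
  simpa [h.2.1] using this

lemma half_le_sqrt2div2 : (1:ℝ)/2 ≤ Real.sqrt 2 / 2 := by
  have : (1:ℝ) ≤ Real.sqrt 2 := by
    rw [show (1:ℝ) = Real.sqrt 1 from (Real.sqrt_one).symm]
    exact Real.sqrt_le_sqrt (by norm_num)
  linarith

end UpsLemmas


noncomputable def UF : Ultrafilter ℕ := hyperfilter ℕ

instance : (UF : Filter ℕ).NeBot := Ultrafilter.neBot _

lemma uf_le_atTop : (UF : Filter ℕ) ≤ atTop := Nat.hyperfilter_le_atTop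

lemma uf_eventually_ge (N : ℕ) : ∀ᶠ m in (UF : Filter ℕ), N ≤ m :=
  uf_le_atTop (eventually_ge_atTop N)

lemma exists_ulim_real (f : ℕ → ℝ) (c : ℝ)
    (h : ∀ᶠ n in (UF : Filter ℕ), f n ∈ Set.Icc (-c) c) :
    ∃ l, Tendsto f (UF : Filter ℕ) (𝓝 l) := by
  obtain ⟨a, -, ha⟩ := (isCompact_Icc (a := -c) (b := c)).ultrafilter_le_nhds
    (UF.map f) (by rwa [le_principal_iff, Ultrafilter.mem_coe, Ultrafilter.mem_map])
  exact ⟨a, ha⟩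

lemma exists_ulim_proper {α : Type*} [MetricSpace α] [ProperSpace α] (f : ℕ → α) (a : α) (c : ℝ)
    (h : ∀ᶠ n in (UF : Filter ℕ), f n ∈ Metric.closedBall a c) :
    ∃ l, Tendsto f (UF : Filter ℕ) (𝓝 l) := by
  obtain ⟨l, -, hl⟩ := (isCompact_closedBall a c).ultrafilter_le_nhds
    (UF.map f) (by rwa [le_principal_iff, Ultrafilter.mem_coe, Ultrafilter.mem_map])
  exact ⟨l, hl⟩

/-- `|A - B| ≤ c` from eventual pointwise bounds. -/
lemma ulim_abs_sub_le {a b : ℕ → ℝ} {A B c : ℝ}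
    (ha : Tendsto a (UF : Filter ℕ) (𝓝 A)) (hb : Tendsto b (UF : Filter ℕ) (𝓝 B))
    (h : ∀ᶠ m in (UF : Filter ℕ), |a m - b m| ≤ c) : |A - B| ≤ c :=
  le_of_tendsto ((ha.sub hb).abs) h

lemma ulim_le {a : ℕ → ℝ} {A c : ℝ} (ha : Tendsto a (UF : Filter ℕ) (𝓝 A))
    (h : ∀ᶠ m in (UF : Filter ℕ), a m ≤ c) : A ≤ c := le_of_tendsto ha h

/-- Bi-invariant metric group class. -/
class BiInv (α : Type*) [Group α] [MetricSpace α] : Prop where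
  dl : ∀ g h k : α, dist (g * h) (g * k) = dist h k
  dr : ∀ g h k : α, dist (h * g) (k * g) = dist h k

section BiInvLemmas

variable {α : Type*} [Group α] [MetricSpace α] [BiInv α]

lemma dist_mul_le (a b a' b' : α) : dist (a * b) (a' * b') ≤ dist a a' + dist b b' := by
  calc dist (a * b) (a' * b') ≤ dist (a * b) (a' * b) + dist (a' * b) (a' * b') :=
        dist_triangle _ _ _
    _ = dist a a' + dist b b' := by rw [BiInv.dr, BiInv.dl]

lemma dist_mul_one_le (a b : α) : dist (a * b) 1 ≤ dist a 1 + dist b 1 := by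
  simpa using dist_mul_le a b 1 1

lemma dist_inv_inv (a b : α) : dist a⁻¹ b⁻¹ = dist a b := by
  have h1 : dist a⁻¹ b⁻¹ = dist (a * a⁻¹) (a * b⁻¹) := (BiInv.dl a a⁻¹ b⁻¹).symm
  rw [mul_inv_cancel] at h1
  have h2 : dist (1 : α) (a * b⁻¹) = dist (1 * b) (a * b⁻¹ * b) := by rw [BiInv.dr]
  rw [one_mul, inv_mul_cancel_right] at h2
  rw [h1, h2, dist_comm]

lemma dist_inv_one (a : α) : dist a⁻¹ 1 = dist a 1 := by
  simpa [dist_comm] using dist_inv_inv a 1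

lemma tendsto_mul_of_biInv {β : Type*} {l : Filter β} {a b : β → α} {A B : α}
    (ha : Tendsto a l (𝓝 A)) (hb : Tendsto b l (𝓝 B)) :
    Tendsto (fun x => a x * b x) l (𝓝 (A * B)) := by
  rw [tendsto_iff_dist_tendsto_zero]
  apply squeeze_zero (fun _ => dist_nonneg) (fun x => dist_mul_le (a x) (b x) A B)
  have h0 : Tendsto (fun x => dist (a x) A) l (𝓝 0) := tendsto_iff_dist_tendsto_zero.1 ha
  have h1 : Tendsto (fun x => dist (b x) B) l (𝓝 0) := tendsto_iff_dist_tendsto_zero.1 hb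
  simpa using h0.add h1

end BiInvLemmas

section Construction

variable (G : ℕ → Type) [∀ n, Group (G n)] [∀ n, MetricSpace (G n)] [∀ n, BiInv (G n)]

/-- The subgroup of sequences bounded along the ultrafilter. -/
def Bdd : Subgroup (∀ n, G n) where
  carrier := {x | ∃ C, ∀ᶠ n in (UF : Filter ℕ), dist (x n) 1 ≤ C}
  one_mem' := ⟨0, Eventually.of_forall fun n => by simp⟩
  mul_mem' := by
    rintro x y ⟨C, hC⟩ ⟨D, hD⟩
    exact ⟨C + D, (hC.and hD).mono fun n hn =>
      le_trans (dist_mul_one_le _ _) (add_le_add hn.1 hn.2)⟩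
  inv_mem' := by
    rintro x ⟨C, hC⟩
    exact ⟨C, hC.mono fun n hn => by simpa [dist_inv_one] using hn⟩

variable {G}

lemma exists_tendsto_dist (x y : Bdd G) :
    ∃ l, Tendsto (fun n => dist (x.1 n) (y.1 n)) (UF : Filter ℕ) (𝓝 l) := by
  obtain ⟨C, hC⟩ := x.2
  obtain ⟨D, hD⟩ := y.2
  refine exists_ulim_real _ (C + D) ((hC.and hD).mono fun n hn => ?_)
  constructor
  · refine le_trans ?_ dist_nonneg
    simp only [neg_nonpos]
    exact add_nonneg (le_trans dist_nonneg hn.1) (le_trans dist_nonneg hn.2)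
  · calc dist (x.1 n) (y.1 n) ≤ dist (x.1 n) 1 + dist (1:G n) (y.1 n) := dist_triangle _ _ _
      _ ≤ C + D := add_le_add hn.1 (by rw [dist_comm]; exact hn.2)

variable (G)

noncomputable instance instDistBdd : Dist (Bdd G) :=
  ⟨fun x y => limUnder (UF : Filter ℕ) (fun n => dist (x.1 n) (y.1 n))⟩

variable {G}

lemma tendsto_dist_bdd (x y : Bdd G) :
    Tendsto (fun n => dist (x.1 n) (y.1 n)) (UF : Filter ℕ) (𝓝 (dist x y)) :=
  tendsto_nhds_limUnder (exists_tendsto_dist x y)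

lemma bdd_dist_nonneg (x y : Bdd G) : 0 ≤ dist x y :=
  ge_of_tendsto (tendsto_dist_bdd x y) (Eventually.of_forall fun _ => dist_nonneg)

lemma bdd_dist_self (x : Bdd G) : dist x x = 0 :=
  tendsto_nhds_unique (tendsto_dist_bdd x x) (by simpa using tendsto_const_nhds)

lemma bdd_dist_comm (x y : Bdd G) : dist x y = dist y x :=
  tendsto_nhds_unique (tendsto_dist_bdd x y) (by simpa [dist_comm] using tendsto_dist_bdd y x)

lemma bdd_dist_triangle (x y z : Bdd G) : dist x z ≤ dist x y + dist y z :=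
  le_of_tendsto_of_tendsto' (tendsto_dist_bdd x z)
    ((tendsto_dist_bdd x y).add (tendsto_dist_bdd y z))
    (fun n => dist_triangle _ _ _)

lemma bdd_dist_mul_le (a b a' b' : Bdd G) :
    dist (a * b) (a' * b') ≤ dist a a' + dist b b' :=
  le_of_tendsto_of_tendsto' (tendsto_dist_bdd (a * b) (a' * b'))
    ((tendsto_dist_bdd a a').add (tendsto_dist_bdd b b'))
    (fun n => dist_mul_le _ _ _ _)

lemma bdd_dist_inv (a b : Bdd G) : dist a⁻¹ b⁻¹ = dist a b :=
  tendsto_nhds_unique (tendsto_dist_bdd a⁻¹ b⁻¹)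
    (by simpa [dist_inv_inv] using tendsto_dist_bdd a b)

lemma bdd_dist_mul_left (g h k : Bdd G) : dist (g * h) (g * k) = dist h k :=
  tendsto_nhds_unique (tendsto_dist_bdd (g * h) (g * k))
    (by simpa [BiInv.dl] using tendsto_dist_bdd h k)

lemma bdd_dist_mul_right (g h k : Bdd G) : dist (h * g) (k * g) = dist h k :=
  tendsto_nhds_unique (tendsto_dist_bdd (h * g) (k * g))
    (by simpa [BiInv.dr] using tendsto_dist_bdd h k)

variable (G)

/-- The null equivalence. -/
instance nullSetoid : Setoid (Bdd G) where
  r x y := dist x y = 0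
  iseqv := by
    constructor
    · exact bdd_dist_self
    · intro x y h; rw [bdd_dist_comm]; exact h
    · intro x y z h1 h2
      refine le_antisymm ?_ (bdd_dist_nonneg _ _)
      calc dist x z ≤ dist x y + dist y z := bdd_dist_triangle _ _ _
        _ = 0 := by rw [h1, h2, add_zero]

/-- The limit group: quotient of the bounded sequences by the null relation. -/
def HH : Type := Quotient (nullSetoid G)

variable {G}

def HH.mk (x : Bdd G) : HH G := Quotient.mk (nullSetoid G) x

lemma hh_mul_wd (a a' : Bdd G) (h1 : a ≈ a') (b b' : Bdd G) (h2 : b ≈ b') :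
    (a * b) ≈ (a' * b') := by
  change dist _ _ = 0 at *
  refine le_antisymm ?_ (bdd_dist_nonneg _ _)
  calc dist (a * b) (a' * b') ≤ dist a a' + dist b b' := bdd_dist_mul_le _ _ _ _
    _ = 0 := by rw [h1, h2, add_zero]

instance instGroupHH : Group (HH G) where
  mul := Quotient.map₂ (· * ·) hh_mul_wd
  one := HH.mk 1
  inv := Quotient.map (·⁻¹) (by
    intro a b h
    change dist _ _ = 0 at *
    rwa [bdd_dist_inv])
  mul_assoc a b c := by
    induction a using Quotient.inductionOn
    induction b using Quotient.inductionOn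
    induction c using Quotient.inductionOn
    exact congrArg (Quotient.mk _) (mul_assoc _ _ _)
  one_mul a := by
    induction a using Quotient.inductionOn
    exact congrArg (Quotient.mk _) (one_mul _)
  mul_one a := by
    induction a using Quotient.inductionOn
    exact congrArg (Quotient.mk _) (mul_one _)
  inv_mul_cancel a := by
    induction a using Quotient.inductionOn
    exact congrArg (Quotient.mk _) (inv_mul_cancel _)

lemma HH.mk_mul (x y : Bdd G) : HH.mk x * HH.mk y = HH.mk (x * y) := rfl

lemma HH.one_def : (1 : HH G) = HH.mk (1 : Bdd G) := rfl

noncomputable instance instMetricHH : MetricSpace (HH G) where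
  dist := Quotient.lift₂ (fun x y => dist x y) (by
    intro a b a' b' h1 h2
    change dist a a' = 0 at h1
    change dist b b' = 0 at h2
    have c1 : dist a' a = 0 := by rw [bdd_dist_comm]; exact h1
    have c2 : dist b' b = 0 := by rw [bdd_dist_comm]; exact h2
    have t1 := bdd_dist_triangle a a' b
    have t2 := bdd_dist_triangle a' b' b
    have t3 := bdd_dist_triangle a' a b'
    have t4 := bdd_dist_triangle a b b'
    exact le_antisymm (by linarith) (by linarith))
  dist_self a := by
    induction a using Quotient.inductionOn
    exact bdd_dist_self _
  dist_comm a b := by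
    induction a using Quotient.inductionOn
    induction b using Quotient.inductionOn
    exact bdd_dist_comm _ _
  dist_triangle a b c := by
    induction a using Quotient.inductionOn
    induction b using Quotient.inductionOn
    induction c using Quotient.inductionOn
    exact bdd_dist_triangle _ _ _
  eq_of_dist_eq_zero := by
    intro a b
    induction a using Quotient.inductionOn
    induction b using Quotient.inductionOn
    intro h
    exact Quotient.sound h

lemma HH.dist_mk (x y : Bdd G) : dist (HH.mk x) (HH.mk y) = dist x y := rfl

lemma hh_dist_mul_left (g h k : HH G) : dist (g * h) (g * k) = dist h k := by
  induction g using Quotient.inductionOn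
  induction h using Quotient.inductionOn
  induction k using Quotient.inductionOn
  exact bdd_dist_mul_left _ _ _

lemma hh_dist_mul_right (g h k : HH G) : dist (h * g) (k * g) = dist h k := by
  induction g using Quotient.inductionOn
  induction h using Quotient.inductionOn
  induction k using Quotient.inductionOn
  exact bdd_dist_mul_right _ _ _

instance instBiInvHH : BiInv (HH G) := ⟨hh_dist_mul_left, hh_dist_mul_right⟩

lemma hh_continuous_mul : Continuous fun p : HH G × HH G => p.1 * p.2 := by
  rw [Metric.continuous_iff]
  intro b ε hε
  refine ⟨ε / 2, by linarith, fun a hab => ?_⟩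
  calc dist (a.1 * a.2) (b.1 * b.2) ≤ dist a.1 b.1 + dist a.2 b.2 := dist_mul_le _ _ _ _
    _ ≤ dist a b + dist a b := add_le_add (le_max_left _ _) (le_max_right _ _)
    _ < ε := by rw [Prod.dist_eq] at hab ⊢; have := hab; linarith [hab]

lemma hh_continuous_inv : Continuous fun g : HH G => g⁻¹ := by
  have : Isometry fun g : HH G => g⁻¹ := fun a b => by
    simp only [edist_dist]
    rw [dist_inv_inv]
  exact this.continuous

end Construction

section Complete

variable {G : ℕ → Type} [∀ n, Group (G n)] [∀ n, MetricSpace (G n)] [∀ n, BiInv (G n)]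

lemma chain_bound (x : ℕ → Bdd G) (A : ℕ → Set ℕ)
    (hA : ∀ j, A j = {m | dist ((x j).1 m) ((x (j+1)).1 m) ≤ 2 * (1/2)^j})
    (m k l : ℕ) (hkl : k ≤ l) (h : ∀ j, k ≤ j → j < l → m ∈ A j) :
    dist ((x k).1 m) ((x l).1 m) ≤ 4 * (1/2)^k - 4 * (1/2)^l := by
  induction l, hkl using Nat.le_induction with
  | base => simp
  | succ l hkl ih =>
    have h1 : dist ((x k).1 m) ((x (l+1)).1 m) ≤
        dist ((x k).1 m) ((x l).1 m) + dist ((x l).1 m) ((x (l+1)).1 m) := dist_triangle _ _ _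
    have h2 : m ∈ A l := h l hkl (Nat.lt_succ_self l)
    rw [hA l] at h2
    have h3 := ih (fun j hj hj' => h j hj (hj'.trans (Nat.lt_succ_self l)))
    have h4 : ((1:ℝ)/2)^(l+1) = (1/2)^l * (1/2) := pow_succ _ _
    simp only [Set.mem_setOf_eq] at h2
    calc dist ((x k).1 m) ((x (l+1)).1 m) ≤ _ + _ := h1
      _ ≤ (4 * (1/2)^k - 4 * (1/2)^l) + 2 * (1/2)^l := add_le_add h3 h2
      _ = 4 * (1/2)^k - 4 * (1/2)^(l+1) := by rw [h4]; ring

lemma complete_HH : CompleteSpace (HH G) := by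
  classical
  apply Metric.complete_of_convergent_controlled_sequences (fun N => (1/2)^N)
    (fun N => by positivity)
  intro u hu
  set x : ℕ → Bdd G := fun k => Quotient.out (u k) with hx
  have hmk : ∀ k, HH.mk (x k) = u k := fun k => Quotient.out_eq _
  set A : ℕ → Set ℕ := fun j => {m | dist ((x j).1 m) ((x (j+1)).1 m) ≤ 2 * (1/2)^j} with hAdef
  have hA : ∀ j, A j ∈ (UF : Filter ℕ) := by
    intro j
    have hd : dist (x j) (x (j+1)) < (1/2)^j := by
      rw [← HH.dist_mk, hmk, hmk]
      exact hu j j (j+1) le_rfl (Nat.le_succ _)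
    have : dist (x j) (x (j+1)) < 2 * (1/2)^j := by nlinarith [pow_pos (by norm_num : (0:ℝ) < 1/2) j]
    exact (tendsto_dist_bdd (x j) (x (j+1))).eventually_le_const this
  set P : ℕ → ℕ → Prop := fun m k => ∀ j < k, m ∈ A j with hPdef
  set c : ℕ → ℕ := fun m => Nat.findGreatest (P m) m with hc
  have hPc : ∀ m, P m (c m) := fun m =>
    Nat.findGreatest_spec (Nat.zero_le m) (fun j hj => absurd hj (Nat.not_lt_zero j))
  -- the diagonal sequence
  have hbd : ∀ m, dist ((x 0).1 m) ((x (c m)).1 m) ≤ 4 := by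
    intro m
    have := chain_bound x A (fun j => rfl) m 0 (c m) (Nat.zero_le _)
      (fun j _ hj' => hPc m j hj')
    have h5 : (0:ℝ) ≤ 4 * (1/2)^(c m) := by positivity
    simpa using this.trans (by linarith)
  obtain ⟨C, hC⟩ := (x 0).2
  set y : Bdd G := ⟨fun m => (x (c m)).1 m, ⟨C + 4, hC.mono (fun m hm => by
    calc dist ((x (c m)).1 m) 1 ≤ dist ((x (c m)).1 m) ((x 0).1 m) + dist ((x 0).1 m) 1 :=
          dist_triangle _ _ _
      _ ≤ 4 + C := add_le_add (by rw [dist_comm]; exact hbd m) hm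
      _ = C + 4 := by ring)⟩⟩ with hy
  refine ⟨HH.mk y, ?_⟩
  have key : ∀ k, dist (u k) (HH.mk y) ≤ 4 * (1/2)^k := by
    intro k
    rw [← hmk k, HH.dist_mk]
    apply ulim_le (tendsto_dist_bdd (x k) y)
    have ev1 : ∀ᶠ m in (UF : Filter ℕ), ∀ j ∈ Finset.range k, m ∈ A j :=
      (eventually_all_finset (Finset.range k)).2 fun j _ => hA j
    filter_upwards [uf_eventually_ge k, ev1] with m hm1 hm2
    have hck : k ≤ c m := Nat.le_findGreatest hm1 (fun j hj => hm2 j (Finset.mem_range.2 hj))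
    have := chain_bound x A (fun j => rfl) m k (c m) hck
      (fun j _ hj' => hPc m j hj')
    have h5 : (0:ℝ) ≤ 4 * (1/2)^(c m) := by positivity
    calc dist ((x k).1 m) (y.1 m) = dist ((x k).1 m) ((x (c m)).1 m) := rfl
      _ ≤ 4 * (1/2)^k := by linarith
  rw [tendsto_iff_dist_tendsto_zero]
  apply squeeze_zero (fun n => dist_nonneg) key
  have : Tendsto (fun n : ℕ => ((1:ℝ)/2)^n) atTop (𝓝 0) :=
    tendsto_pow_atTop_nhds_zero_of_lt_one (by norm_num) (by norm_num)
  simpa using this.const_mul 4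

end Complete

section Main

variable {G : ℕ → Type} [∀ n, Group (G n)] [∀ n, MetricSpace (G n)] [∀ n, BiInv (G n)]

lemma family
    (h_cauchy : ∀ ε : ℝ, 0 < ε → ∃ N : ℕ, ∀ m, N ≤ m → ∀ n, N ≤ n →
      Upsilon (G m) (G n) < ε)
    {η : ℝ} (hη : 0 < η) (hη2 : η ≤ Real.sqrt 2 / 2) :
    ∃ N : ℕ, ∀ n : ℕ, ∃ (σ : ∀ m, G n → G m) (τ : ∀ m, G m → G n),
      N ≤ n → ∀ m, N ≤ m → IsLocAlmostIsoIso (σ m) (τ m) η (1/η) := by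
  obtain ⟨N, hN⟩ := h_cauchy η hη
  refine ⟨N, fun n => ?_⟩
  have key : ∀ m, ∃ p : (G n → G m) × (G m → G n),
      N ≤ n → N ≤ m → IsLocAlmostIsoIso p.1 p.2 η (1/η) := by
    intro m
    by_cases h : N ≤ n ∧ N ≤ m
    · obtain ⟨ς, κ, hi⟩ := exists_of_upsilon_lt hη hη2 (hN n h.1 m h.2)
      exact ⟨(ς, κ), fun _ _ => hi⟩
    · exact ⟨(fun _ => 1, fun _ => 1), fun h1 h2 => absurd ⟨h1, h2⟩ h⟩
  choose p hp using key
  exact ⟨fun m => (p m).1, fun m => (p m).2, fun hn m hm => hp m hn hm⟩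

open Classical in
/-- The truncated almost-morphism into the product. -/
noncomputable def SSfun {n : ℕ} (σ : ∀ m, G n → G m) (N : ℕ) (ρ : ℝ) (g : G n) :
    ∀ m, G m :=
  fun m => if N ≤ m ∧ dist g 1 ≤ ρ then σ m g else 1

lemma SSfun_mem {n : ℕ} {σ : ∀ m, G n → G m} {τ : ∀ m, G m → G n} {N : ℕ} {η ρ : ℝ}
    (hiso : ∀ m, N ≤ m → IsLocAlmostIsoIso (σ m) (τ m) η (1/η))
    (hη : 0 < η) (hρ : 0 ≤ ρ) (hρη : ρ ≤ 1/η) (hη1 : η ≤ 1) (g : G n) :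
    SSfun σ N ρ g ∈ Bdd G := by
  refine ⟨ρ + 1, (uf_eventually_ge N).mono fun m hm => ?_⟩
  by_cases h : N ≤ m ∧ dist g 1 ≤ ρ
  · rw [SSfun, if_pos h]
    have hgball : g ∈ Metric.closedBall (1 : G n) (1/η) := by
      rw [Metric.mem_closedBall]
      exact h.2.trans hρη
    have := iso_norm_fst (hiso m hm) (by positivity) hgball
    have habs := abs_le.1 this
    linarith [habs.1, habs.2, h.2]
  · rw [SSfun, if_neg h]
    simp only [dist_self]
    linarith

lemma SSfun_eq {n : ℕ} {σ : ∀ m, G n → G m} {N : ℕ} {ρ : ℝ} {g : G n}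
    (hg : dist g 1 ≤ ρ) {m : ℕ} (hm : N ≤ m) : SSfun σ N ρ g m = σ m g := by
  rw [SSfun, if_pos ⟨hm, hg⟩]

lemma dist_bdd_one (x : Bdd G) :
    Tendsto (fun m => dist (x.1 m) 1) (UF : Filter ℕ) (𝓝 (dist (HH.mk x) 1)) := by
  have h := tendsto_dist_bdd x (1 : Bdd G)
  exact h

variable [∀ n, ProperSpace (G n)]

lemma tb_ball
    (h_cauchy : ∀ ε : ℝ, 0 < ε → ∃ N : ℕ, ∀ m, N ≤ m → ∀ n, N ≤ n →
      Upsilon (G m) (G n) < ε)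
    (r : ℝ) (hr : 0 ≤ r) : TotallyBounded (Metric.closedBall (1 : HH G) r) := by
  rw [Metric.totallyBounded_iff]
  intro ε hε
  set η := min (min (ε/8) (1/(r+3))) (1/2) with hηdef
  have hη : 0 < η := by
    apply lt_min (lt_min (by linarith) _) (by norm_num)
    positivity
  have hη8 : η ≤ ε/8 := le_trans (min_le_left _ _) (min_le_left _ _)
  have hηr : η ≤ 1/(r+3) := le_trans (min_le_left _ _) (min_le_right _ _)
  have hη12 : η ≤ 1/2 := min_le_right _ _
  have hηs : η ≤ Real.sqrt 2 / 2 := le_trans hη12 half_le_sqrt2div2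
  have hr3 : (0:ℝ) < r + 3 := by linarith
  have h1 : η * (r+3) ≤ 1 := by
    have := (le_div_iff₀ hr3).1 hηr
    linarith
  have hrη : r + 3 ≤ 1/η := (le_div_iff₀ hη).2 (by nlinarith)
  have hηnn : (0:ℝ) ≤ 1/η := by positivity
  obtain ⟨N, hfam⟩ := family h_cauchy hη hηs
  obtain ⟨σ, τ, hστ⟩ := hfam N
  have hiso : ∀ m, N ≤ m → IsLocAlmostIsoIso (σ m) (τ m) η (1/η) := hστ le_rfl
  obtain ⟨t, hts, htf, htcov⟩ := totallyBounded_iff_subset.1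
    ((isCompact_closedBall (1:G N) (r+2)).totallyBounded) _
    (dist_mem_uniformity (show (0:ℝ) < ε/8 by linarith))
  set F : G N → HH G := fun y =>
    HH.mk ⟨SSfun σ N (r+2) y,
      SSfun_mem hiso hη (by linarith) (by linarith) (by linarith) y⟩ with hF
  refine ⟨F '' t, htf.image F, ?_⟩
  intro h hmem
  set x : Bdd G := Quotient.out h with hxdef
  have hmk : HH.mk x = h := Quotient.out_eq _
  have hx1 : Tendsto (fun m => dist (x.1 m) 1) (UF : Filter ℕ) (𝓝 (dist h 1)) := by
    have := dist_bdd_one x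
    rwa [hmk] at this
  have hdist : dist h 1 ≤ r := Metric.mem_closedBall.1 hmem
  have hev1 : ∀ᶠ m in (UF : Filter ℕ), dist (x.1 m) 1 ≤ r + 1 :=
    hx1.eventually_le_const (by linarith)
  have hev2 : ∀ᶠ m in (UF : Filter ℕ), ∃ y ∈ t, dist (x.1 m) (σ m y) ≤ ε/4 := by
    filter_upwards [hev1, uf_eventually_ge N] with m hm1 hm2
    have hxball : x.1 m ∈ Metric.closedBall (1 : G m) (1/η) := by
      rw [Metric.mem_closedBall]
      linarith
    have hτ : τ m (x.1 m) ∈ Metric.closedBall (1 : G N) (r+2) := by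
      have := iso_norm_snd (hiso m hm2) hηnn hxball
      have habs := abs_le.1 this
      rw [Metric.mem_closedBall]
      linarith [habs.1, habs.2]
    obtain ⟨y, hyt, hd⟩ := Set.mem_iUnion₂.1 (htcov hτ)
    have hyball : y ∈ Metric.closedBall (1 : G N) (1/η) := by
      have := hts hyt
      rw [Metric.mem_closedBall] at this ⊢
      linarith
    have htrans := iso_transfer (hiso m hm2) hηnn hxball hyball
    have habs := abs_le.1 htrans
    have hd' : dist (τ m (x.1 m)) y < ε/8 := hd
    exact ⟨y, hyt, by linarith [habs.1, habs.2]⟩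
  have hUnion : {m | ∃ y ∈ t, dist (x.1 m) (σ m y) ≤ ε/4} ∈ UF := hev2
  have hUnion' : (⋃ y ∈ t, {m | dist (x.1 m) (σ m y) ≤ ε/4}) ∈ UF := by
    have : {m | ∃ y ∈ t, dist (x.1 m) (σ m y) ≤ ε/4} =
        ⋃ y ∈ t, {m | dist (x.1 m) (σ m y) ≤ ε/4} := by
      ext m; simp [Set.mem_iUnion]
    rwa [this] at hUnion
  obtain ⟨y, hyt, hEy⟩ := (Ultrafilter.finite_biUnion_mem_iff htf).1 hUnion'
  have hyr2 : dist y 1 ≤ r + 2 := Metric.mem_closedBall.1 (hts hyt)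
  have hFy : dist h (F y) ≤ ε/4 := by
    rw [← hmk]
    apply ulim_le (tendsto_dist_bdd x _)
    have hEy' : ∀ᶠ m in (UF : Filter ℕ), dist (x.1 m) (σ m y) ≤ ε/4 := hEy
    filter_upwards [hEy', uf_eventually_ge N] with m hm1 hm2
    rwa [SSfun_eq hyr2 hm2]
  refine Set.mem_biUnion (Set.mem_image_of_mem F hyt) ?_
  rw [Metric.mem_ball]
  calc dist h (F y) ≤ ε/4 := hFy
    _ < ε := by linarith

lemma bdd_mul_apply (x y : Bdd G) (m : ℕ) : (x * y).1 m = x.1 m * y.1 m := rfl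

lemma bdd_one_apply (m : ℕ) : (1 : Bdd G).1 m = 1 := rfl

lemma proper_HH
    (h_cauchy : ∀ ε : ℝ, 0 < ε → ∃ N : ℕ, ∀ m, N ≤ m → ∀ n, N ≤ n →
      Upsilon (G m) (G n) < ε) : ProperSpace (HH G) := by
  haveI : CompleteSpace (HH G) := complete_HH
  constructor
  intro x r
  rcases lt_or_ge r 0 with hr | hr
  · rw [Metric.closedBall_eq_empty.2 hr]
    exact isCompact_empty
  · rw [isCompact_iff_totallyBounded_isComplete]
    constructor
    · have himg : Metric.closedBall x r =
          (fun g => x * g) '' Metric.closedBall (1 : HH G) r := by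
        ext y
        simp only [Set.mem_image, Metric.mem_closedBall]
        constructor
        · intro hy
          refine ⟨x⁻¹ * y, ?_, by rw [mul_inv_cancel_left]⟩
          have h2 : dist (x * (x⁻¹ * y)) (x * 1) = dist (x⁻¹ * y) 1 := hh_dist_mul_left _ _ _
          rw [mul_inv_cancel_left, mul_one] at h2
          rw [← h2]
          exact hy
        · rintro ⟨g, hg, rfl⟩
          have h2 : dist (x * g) (x * 1) = dist g 1 := hh_dist_mul_left _ _ _
          rw [mul_one] at h2
          rw [h2]
          exact hg
      rw [himg]
      refine (tb_ball h_cauchy r hr).image ?_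
      have hiso : Isometry (fun g : HH G => x * g) := fun a b => by
        simp only [edist_dist]
        rw [hh_dist_mul_left]
      exact hiso.uniformContinuous
    · exact Metric.isClosed_closedBall.isComplete

lemma main_est
    (h_cauchy : ∀ ε : ℝ, 0 < ε → ∃ N : ℕ, ∀ m, N ≤ m → ∀ n, N ≤ n →
      Upsilon (G m) (G n) < ε)
    {ε : ℝ} (hε : 0 < ε) (hεs : ε ≤ 1/2) :
    ∃ N : ℕ, ∀ n, N ≤ n → Upsilon (G n) (HH G) < ε := by
  classical
  set r : ℝ := 2/ε with hrdef
  have hr0 : 0 < r := by positivity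
  set η := min (ε/6) (1/(r+2)) with hηdef
  have hη : 0 < η := lt_min (by linarith) (by positivity)
  have hη6 : η ≤ ε/6 := min_le_left _ _
  have hηr : η ≤ 1/(r+2) := min_le_right _ _
  have hηs : η ≤ Real.sqrt 2 / 2 := by
    refine le_trans hη6 (le_trans ?_ half_le_sqrt2div2)
    linarith
  have hη1 : η ≤ 1 := by
    refine le_trans hη6 ?_
    linarith
  have hr2 : (0:ℝ) < r + 2 := by linarith
  have h1 : η * (r+2) ≤ 1 := by
    have := (le_div_iff₀ hr2).1 hηr
    linarith
  have hrη : r + 2 ≤ 1/η := (le_div_iff₀ hη).2 (by nlinarith)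
  have hηnn : (0:ℝ) ≤ 1/η := by positivity
  obtain ⟨N, hfam⟩ := family h_cauchy hη hηs
  refine ⟨N, fun n hn => ?_⟩
  obtain ⟨σ, τ, hστ⟩ := hfam n
  have hiso : ∀ m, N ≤ m → IsLocAlmostIsoIso (σ m) (τ m) η (1/η) := hστ hn
  set S : G n → Bdd G := fun g =>
    ⟨SSfun σ N (r+1) g, SSfun_mem hiso hη (by linarith) (by linarith) hη1 g⟩ with hSdef
  set ς : G n → HH G := fun g => HH.mk (S g) with hςdef
  set rep : HH G → Bdd G := fun c => if c = 1 then 1 else Quotient.out c with hrepdef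
  set κ : HH G → G n := fun c =>
    if hx : ∃ p, Tendsto (fun m => τ m ((rep c).1 m)) (UF : Filter ℕ) (𝓝 p)
    then hx.choose else 1 with hκdef
  -- the representative represents
  have hrepone : rep (1 : HH G) = 1 := by
    show (if (1 : HH G) = 1 then (1 : Bdd G) else Quotient.out (1 : HH G)) = 1
    rw [if_pos rfl]
  have hmkrep : ∀ c : HH G, HH.mk (rep c) = c := by
    intro c
    simp only [hrepdef]
    by_cases h : c = 1
    · rw [if_pos h, h]; rfl
    · rw [if_neg h]; exact Quotient.out_eq _
  -- ς 1 = 1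
  have hς1 : ς 1 = 1 := by
    simp only [hςdef]
    have : S 1 = 1 := by
      rw [hSdef]
      apply Subtype.ext
      funext m
      show SSfun σ N (r+1) (1 : G n) m = 1
      rw [SSfun]
      by_cases h : N ≤ m ∧ dist (1 : G n) 1 ≤ r + 1
      · rw [if_pos h]; exact (hiso m h.1).1
      · rw [if_neg h]
    rw [this]; rfl
  -- κ 1 = 1
  have hτone : Tendsto (fun m => τ m ((rep (1 : HH G)).1 m)) (UF : Filter ℕ) (𝓝 (1 : G n)) := by
    have heq : (fun _ : ℕ => (1 : G n)) =ᶠ[(UF : Filter ℕ)]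
        (fun m => τ m ((rep (1 : HH G)).1 m)) := by
      filter_upwards [uf_eventually_ge N] with m hm
      rw [hrepone, bdd_one_apply]
      exact ((hiso m hm).2.1).symm
    exact tendsto_const_nhds.congr' heq
  have hκ1 : κ 1 = 1 := by
    have hex : ∃ p, Tendsto (fun m => τ m ((rep (1:HH G)).1 m)) (UF : Filter ℕ) (𝓝 p) :=
      ⟨1, hτone⟩
    simp only [hκdef]
    rw [dif_pos hex]
    exact tendsto_nhds_unique hex.choose_spec hτone
  -- eventual bounds for representatives
  have hrepev : ∀ c : HH G, dist c 1 ≤ r →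
      ∀ᶠ m in (UF : Filter ℕ), dist ((rep c).1 m) 1 ≤ r + 1 := by
    intro c hc
    have h2 := dist_bdd_one (rep c)
    rw [hmkrep c] at h2
    exact h2.eventually_le_const (by linarith)
  -- the κ limit
  have hκlim : ∀ c : HH G, dist c 1 ≤ r →
      Tendsto (fun m => τ m ((rep c).1 m)) (UF : Filter ℕ) (𝓝 (κ c)) := by
    intro c hc
    have hbd : ∀ᶠ m in (UF : Filter ℕ),
        τ m ((rep c).1 m) ∈ Metric.closedBall (1 : G n) (r+2) := by
      filter_upwards [hrepev c hc, uf_eventually_ge N] with m hm1 hm2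
      have hball : (rep c).1 m ∈ Metric.closedBall (1 : G m) (1/η) := by
        rw [Metric.mem_closedBall]; linarith
      have := iso_norm_snd (hiso m hm2) hηnn hball
      have habs := abs_le.1 this
      rw [Metric.mem_closedBall]
      linarith [habs.1, habs.2]
    have hex := exists_ulim_proper _ (1 : G n) (r+2) hbd
    simp only [hκdef]
    rw [dif_pos hex]
    exact hex.choose_spec
  -- conclude via an (ε/2)–almost isometric isomorphism
  have hrad : (1:ℝ)/(ε/2) = r := by rw [hrdef, one_div_div]
  have hups : Upsilon (G n) (HH G) ≤ ε/2 := by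
    refine upsilon_le (by linarith) ⟨ς, κ, ?_⟩
    rw [hrad]
    refine ⟨hς1, hκ1, ?_, ?_⟩
    · -- first condition
      intro g hg g' hg' c hc
      rw [Metric.mem_closedBall] at hg hg' hc
      have hAB : dist (ς g * ς g') c = dist (S g * S g') (rep c) := by
        conv_lhs => rw [← hmkrep c]
        simp only [hςdef]
        rw [HH.mk_mul]
        exact HH.dist_mk _ _
      have hA := tendsto_dist_bdd (S g * S g') (rep c)
      have hB : Tendsto (fun m => dist (g * g') (τ m ((rep c).1 m))) (UF : Filter ℕ)
          (𝓝 (dist (g * g') (κ c))) := tendsto_const_nhds.dist (hκlim c hc)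
      rw [hAB]
      refine ulim_abs_sub_le hA hB ?_
      filter_upwards [hrepev c hc, uf_eventually_ge N] with m hm1 hm2
      have he1 : (S g * S g').1 m = σ m g * σ m g' := by
        rw [bdd_mul_apply]
        rw [hSdef]
        show SSfun σ N (r+1) g m * SSfun σ N (r+1) g' m = _
        rw [SSfun_eq (by linarith : dist g 1 ≤ r+1) hm2,
          SSfun_eq (by linarith : dist g' 1 ≤ r+1) hm2]
      rw [he1]
      refine le_trans ((hiso m hm2).2.2.1 g ?_ g' ?_ ((rep c).1 m) ?_) (by linarith) <;>
        rw [Metric.mem_closedBall] <;> linarith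
    · -- second condition
      intro c hc c' hc' h hh
      rw [Metric.mem_closedBall] at hc hc' hh
      have hA : Tendsto (fun m => dist (τ m ((rep c).1 m) * τ m ((rep c').1 m)) h)
          (UF : Filter ℕ) (𝓝 (dist (κ c * κ c') h)) :=
        (tendsto_mul_of_biInv (hκlim c hc) (hκlim c' hc')).dist tendsto_const_nhds
      have hB' : dist (c * c') (ς h) = dist (rep c * rep c') (S h) := by
        conv_lhs => rw [← hmkrep c, ← hmkrep c']
        simp only [hςdef]
        rw [HH.mk_mul]
        exact HH.dist_mk _ _
      have hB := tendsto_dist_bdd (rep c * rep c') (S h)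
      rw [hB']
      refine ulim_abs_sub_le hA hB ?_
      filter_upwards [hrepev c hc, hrepev c' hc', uf_eventually_ge N] with m hm1 hm1' hm2
      have he1 : (rep c * rep c').1 m = (rep c).1 m * (rep c').1 m := bdd_mul_apply _ _ _
      rw [he1, show (S h).1 m = σ m h from SSfun_eq (by linarith : dist h 1 ≤ r+1) hm2]
      refine le_trans ((hiso m hm2).2.2.2 ((rep c).1 m) ?_ ((rep c').1 m) ?_ h ?_)
        (by linarith) <;> rw [Metric.mem_closedBall] <;> linarith
  linarith

end Main

end Stmt10

/-- A Cauchy sequence, for the Gromov-Hausdorff monoid distance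
`Υ`, of proper metric groups with bi-invariant metrics converges for `Υ` to some
proper metric group. -/
theorem upsilon_cauchy_biinvariant_groups_convergence
    (G : ℕ → Type) [∀ n, Group (G n)] [∀ n, MetricSpace (G n)]
    (h_left : ∀ n, ∀ g h k : G n, dist (g * h) (g * k) = dist h k)
    (h_right : ∀ n, ∀ g h k : G n, dist (h * g) (k * g) = dist h k)
    (h_cont : ∀ n, Continuous fun p : G n × G n => p.1 * p.2)
    (h_inv : ∀ n, Continuous fun g : G n => g⁻¹)
    (h_proper : ∀ n, ProperSpace (G n))
    (h_cauchy : ∀ ε : ℝ, 0 < ε → ∃ N : ℕ, ∀ m, N ≤ m → ∀ n, N ≤ n →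
      Upsilon (G m) (G n) < ε) :
    ∃ (H : Type) (_ : Group H) (_ : MetricSpace H),
      (∀ g h k : H, dist (g * h) (g * k) = dist h k) ∧
      (Continuous fun p : H × H => p.1 * p.2) ∧
      (Continuous fun g : H => g⁻¹) ∧
      ProperSpace H ∧
      Filter.Tendsto (fun n => Upsilon (G n) H) Filter.atTop (nhds 0) := by
  haveI hbi : ∀ n, Stmt10.BiInv (G n) := fun n => ⟨h_left n, h_right n⟩
  haveI hpr : ∀ n, ProperSpace (G n) := h_proper
  refine ⟨Stmt10.HH G, Stmt10.instGroupHH, Stmt10.instMetricHH, Stmt10.hh_dist_mul_left,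
    Stmt10.hh_continuous_mul, Stmt10.hh_continuous_inv, Stmt10.proper_HH h_cauchy, ?_⟩
  rw [Metric.tendsto_atTop]
  intro ε hε
  have hε2 : 0 < min (ε/2) (1/2) := lt_min (by linarith) (by norm_num)
  have hεle : min (ε/2) (1/2) ≤ 1/2 := min_le_right _ _
  obtain ⟨N, hN⟩ := Stmt10.main_est h_cauchy hε2 hεle
  refine ⟨N, fun n hn => ?_⟩
  have h1 := hN n hn
  have h2 := Stmt10.upsilon_nonneg (A := G n) (B := Stmt10.HH G)
  rw [Real.dist_eq, sub_zero, abs_of_nonneg h2]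
  calc Upsilon (G n) (Stmt10.HH G) < min (ε/2) (1/2) := h1
    _ ≤ ε/2 := min_le_left _ _
    _ < ε := by linarith
end

section
/- Let A and B be unital C*-algebras. Let D be a dense ℝ-linear subspace of the self-adjoint part sa(A) of A with 1_A ∈ D, and let L : D → [0,∞) be a seminorm such that {a ∈ D : L(a) = 0} = ℝ·1_A. For unit-preserving bounded linear maps α, β : A → B, set mkD_L(α, β) = sup{‖α(a) − β(a)‖_B : a ∈ D, L(a) ≤ 1}. Let (α_n)_{n∈ℕ} be a sequence of unit-preserving bounded linear maps from A to B and α_∞ a unit-preserving bounded linear map from A to B, such that there exists B' > 0 with ‖α_n‖ ≤ B' for all n ∈ ℕ ∪ {∞} (operator norm), and lim_{n→∞} mkD_L(α_n, α_∞) = 0. Then for every a ∈ A, lim_{n→∞} ‖α_n(a) − α_∞(a)‖_B = 0. -/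
/-- Let `A`, `B` be unital C*-algebras, `D` a dense ℝ-linear
subspace of `sa(A)` containing `1`, and `L` a seminorm on `D` whose kernel is
`ℝ·1`.  If a uniformly bounded sequence `(α_n)` of unit-preserving bounded linear
maps converges to a unit-preserving bounded linear map `α_∞` for the distance
`mkD_L(α, β) = sup {‖α(a) − β(a)‖ : a ∈ D, L(a) ≤ 1}`, then `(α_n)` converges to
`α_∞` pointwise in norm.  (Convergence of `mkD_L(α_n, α_∞)` to `0` is expressed by
its `ε`-`N` characterization.) -/
theorem pointwise_convergence_of_mkD_convergence
    (A B : Type*)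
    [NormedRing A] [StarRing A] [CStarRing A] [NormedAlgebra ℂ A] [StarModule ℂ A]
    [CompleteSpace A]
    [NormedRing B] [StarRing B] [CStarRing B] [NormedAlgebra ℂ B] [StarModule ℂ B]
    [CompleteSpace B]
    (D : Submodule ℝ A)
    (hD_sa : ∀ a ∈ D, IsSelfAdjoint a)
    (hD_one : (1 : A) ∈ D)
    (hD_dense : ∀ a : A, IsSelfAdjoint a → a ∈ closure (D : Set A))
    (L : A → ℝ)
    (hL_nonneg : ∀ a ∈ D, 0 ≤ L a)
    (hL_add : ∀ a ∈ D, ∀ b ∈ D, L (a + b) ≤ L a + L b)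
    (hL_smul : ∀ t : ℝ, ∀ a ∈ D, L (t • a) = |t| * L a)
    (hL_ker : {a : A | a ∈ D ∧ L a = 0} = {a : A | ∃ t : ℝ, a = t • (1 : A)})
    (α : ℕ → A →L[ℂ] B) (α' : A →L[ℂ] B)
    (hα_one : ∀ n, α n 1 = 1) (hα'_one : α' 1 = 1)
    (B' : ℝ) (hB' : 0 < B')
    (hα_bdd : ∀ n, ‖α n‖ ≤ B') (hα'_bdd : ‖α'‖ ≤ B')
    (h_mkD : ∀ ε : ℝ, 0 < ε → ∃ N : ℕ, ∀ n, N ≤ n →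
      ∀ a ∈ D, L a ≤ 1 → ‖α n a - α' a‖ ≤ ε) :
    ∀ a : A, Filter.Tendsto (fun n => ‖α n a - α' a‖) Filter.atTop (nhds 0) := by

  -- Step 1: convergence on D
  have hD : ∀ d ∈ D, Filter.Tendsto (fun n => ‖α n d - α' d‖) Filter.atTop (nhds 0) := by
    intro d hd
    rcases eq_or_lt_of_le (hL_nonneg d hd) with h0 | hpos
    · have hmem : d ∈ {a : A | a ∈ D ∧ L a = 0} := ⟨hd, h0.symm⟩
      rw [hL_ker] at hmem
      obtain ⟨t, rfl⟩ := hmem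
      have hz : ∀ n, α n (t • (1 : A)) - α' (t • 1) = 0 := by
        intro n
        rw [(α n).map_smul_of_tower, α'.map_smul_of_tower, hα_one, hα'_one, sub_self]
      simp only [hz, norm_zero]
      exact tendsto_const_nhds
    · rw [Metric.tendsto_atTop]
      intro ε hε
      obtain ⟨N, hN⟩ := h_mkD (ε / (2 * L d)) (by positivity)
      refine ⟨N, fun n hn => ?_⟩
      have hd' : (L d)⁻¹ • d ∈ D := D.smul_mem _ hd
      have hLd' : L ((L d)⁻¹ • d) ≤ 1 := by
        rw [hL_smul _ _ hd, abs_of_pos (inv_pos.2 hpos), inv_mul_cancel₀ hpos.ne']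
      have hkey := hN n hn _ hd' hLd'
      have heq : α n d - α' d = L d • (α n ((L d)⁻¹ • d) - α' ((L d)⁻¹ • d)) := by
        rw [(α n).map_smul_of_tower, α'.map_smul_of_tower, smul_sub, smul_smul, smul_smul,
          mul_inv_cancel₀ hpos.ne', one_smul]
        simp
      have : ‖α n d - α' d‖ ≤ L d * (ε / (2 * L d)) := by
        rw [heq, norm_smul, Real.norm_eq_abs, abs_of_pos hpos]
        exact mul_le_mul_of_nonneg_left hkey hpos.le
      have hlt : L d * (ε / (2 * L d)) < ε := by
        have heq2 : L d * (ε / (2 * L d)) = ε / 2 := by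
          field_simp
        rw [heq2]; linarith
      rw [Real.dist_eq, sub_zero, abs_of_nonneg (norm_nonneg _)]
      exact lt_of_le_of_lt this hlt
  -- Step 2: convergence on self-adjoint elements
  have hSA : ∀ a : A, IsSelfAdjoint a →
      Filter.Tendsto (fun n => ‖α n a - α' a‖) Filter.atTop (nhds 0) := by
    intro a ha
    rw [Metric.tendsto_atTop]
    intro ε hε
    obtain ⟨d, hdD, hdist⟩ := Metric.mem_closure_iff.mp (hD_dense a ha) (ε / (3 * B'))
      (by positivity)
    obtain ⟨N, hN⟩ := (Metric.tendsto_atTop.mp (hD d hdD)) (ε / 3) (by positivity)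
    refine ⟨N, fun n hn => ?_⟩
    have hmid : ‖α n d - α' d‖ < ε / 3 := by
      have := hN n hn
      rwa [Real.dist_eq, sub_zero, abs_of_nonneg (norm_nonneg _)] at this
    have hsplit : α n a - α' a = α n (a - d) + (α n d - α' d) + α' (d - a) := by
      simp only [map_sub]; abel
    have h1 : ‖α n (a - d)‖ ≤ B' * ‖a - d‖ :=
      le_trans ((α n).le_opNorm _) (mul_le_mul_of_nonneg_right (hα_bdd n) (norm_nonneg _))
    have h2 : ‖α' (d - a)‖ ≤ B' * ‖a - d‖ := by
      have := le_trans (α'.le_opNorm (d - a))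
        (mul_le_mul_of_nonneg_right hα'_bdd (norm_nonneg _))
      rwa [norm_sub_rev d a] at this
    have hda : ‖a - d‖ < ε / (3 * B') := by rwa [← dist_eq_norm]
    have hbd : B' * ‖a - d‖ < ε / 3 := by
      have h := mul_lt_mul_of_pos_left hda hB'
      have heq2 : B' * (ε / (3 * B')) = ε / 3 := by
        field_simp
      linarith
    rw [Real.dist_eq, sub_zero, abs_of_nonneg (norm_nonneg _), hsplit]
    calc ‖α n (a - d) + (α n d - α' d) + α' (d - a)‖
        ≤ ‖α n (a - d)‖ + ‖α n d - α' d‖ + ‖α' (d - a)‖ := norm_add₃_le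
      _ < ε / 3 + ε / 3 + ε / 3 := by
          exact add_lt_add (add_lt_add (lt_of_le_of_lt h1 hbd) hmid) (lt_of_le_of_lt h2 hbd)
      _ = ε := by ring
  -- Step 3: general elements via real and imaginary parts
  intro a
  have hx := hSA (realPart a) (realPart a).2
  have hy := hSA (imaginaryPart a) (imaginaryPart a).2
  have hbound : ∀ n, ‖α n a - α' a‖ ≤
      ‖α n (realPart a) - α' (realPart a)‖ + ‖α n (imaginaryPart a) - α' (imaginaryPart a)‖ := by
    intro n
    have hdecomp : (a : A) = (realPart a : A) + Complex.I • (imaginaryPart a : A) :=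
      (realPart_add_I_smul_imaginaryPart a).symm
    have : α n a - α' a = (α n (realPart a) - α' (realPart a))
        + Complex.I • (α n (imaginaryPart a) - α' (imaginaryPart a)) := by
      conv_lhs => rw [hdecomp]
      simp only [map_add, map_smul, smul_sub]
      abel
    rw [this]
    refine le_trans (norm_add_le _ _) ?_
    rw [norm_smul, Complex.norm_I, one_mul]
  have hsum : Filter.Tendsto (fun n =>
      ‖α n (realPart a) - α' (realPart a)‖ + ‖α n (imaginaryPart a) - α' (imaginaryPart a)‖)
      Filter.atTop (nhds 0) := by
    have := hx.add hy
    simpa using this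
  exact squeeze_zero (fun n => norm_nonneg _) hbound hsum
end

section
/- Let A and B be unital C*-algebras. Let D be a dense ℝ-linear subspace of the self-adjoint part sa(A) of A with 1_A ∈ D, and let L : D → [0,∞) be a seminorm such that L(1_A) = 0. Suppose there exists a state μ of A such that the set {a ∈ D : L(a) ≤ 1, μ(a) = 0} is totally bounded for the norm of A. For unit-preserving bounded linear maps α, β : A → B, set mkD_L(α, β) = sup{‖α(a) − β(a)‖_B : a ∈ D, L(a) ≤ 1}. Let (α_n)_{n∈ℕ} be a sequence of unit-preserving bounded linear maps from A to B and α_∞ a unit-preserving bounded linear map from A to B, such that there exists B' > 0 with ‖α_n‖ ≤ B' for all n ∈ ℕ ∪ {∞} (operator norm), and for every a ∈ A, lim_{n→∞} ‖α_n(a) − α_∞(a)‖_B = 0. Then lim_{n→∞} mkD_L(α_n, α_∞) = 0. -/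
open scoped ComplexOrder

/-- Let `A`, `B` be unital C*-algebras, `D` a dense ℝ-linear
subspace of `sa(A)` containing `1`, and `L` a seminorm on `D` with `L(1) = 0`.
Assume there is a state `μ` of `A` such that `{a ∈ D : L(a) ≤ 1, μ(a) = 0}` is
totally bounded in norm.  If a uniformly bounded sequence `(α_n)` of
unit-preserving bounded linear maps converges pointwise in norm to a
unit-preserving bounded linear map `α_∞`, then `mkD_L(α_n, α_∞) → 0`, expressed by
its `ε`-`N` characterization: for every `ε > 0` there is `N` with
`‖α_n(a) − α_∞(a)‖ ≤ ε` for all `n ≥ N` and all `a ∈ D` with `L(a) ≤ 1`. -/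
theorem mkD_convergence_of_pointwise_convergence
    (A B : Type*)
    [NormedRing A] [StarRing A] [CStarRing A] [NormedAlgebra ℂ A] [StarModule ℂ A]
    [CompleteSpace A]
    [NormedRing B] [StarRing B] [CStarRing B] [NormedAlgebra ℂ B] [StarModule ℂ B]
    [CompleteSpace B]
    (D : Submodule ℝ A)
    (hD_sa : ∀ a ∈ D, IsSelfAdjoint a)
    (hD_one : (1 : A) ∈ D)
    (hD_dense : ∀ a : A, IsSelfAdjoint a → a ∈ closure (D : Set A))
    (L : A → ℝ)
    (hL_nonneg : ∀ a ∈ D, 0 ≤ L a)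
    (hL_add : ∀ a ∈ D, ∀ b ∈ D, L (a + b) ≤ L a + L b)
    (hL_smul : ∀ t : ℝ, ∀ a ∈ D, L (t • a) = |t| * L a)
    (hL_one : L 1 = 0)
    (μ : A →L[ℂ] ℂ)
    (hμ_one : μ 1 = 1)
    (hμ_pos : ∀ a : A, 0 ≤ μ (star a * a))
    (h_tb : TotallyBounded {a : A | a ∈ D ∧ L a ≤ 1 ∧ μ a = 0})
    (α : ℕ → A →L[ℂ] B) (α' : A →L[ℂ] B)
    (hα_one : ∀ n, α n 1 = 1) (hα'_one : α' 1 = 1)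
    (B' : ℝ) (hB' : 0 < B')
    (hα_bdd : ∀ n, ‖α n‖ ≤ B') (hα'_bdd : ‖α'‖ ≤ B')
    (h_ptwise : ∀ a : A,
      Filter.Tendsto (fun n => ‖α n a - α' a‖) Filter.atTop (nhds 0)) :
    ∀ ε : ℝ, 0 < ε → ∃ N : ℕ, ∀ n, N ≤ n →
      ∀ a ∈ D, L a ≤ 1 → ‖α n a - α' a‖ ≤ ε := by
  intro ε hε
  -- μ is real on self-adjoint elements
  have him : ∀ a : A, IsSelfAdjoint a → (μ a).im = 0 := by
    intro a ha
    have h1 : (μ (star a * a)).im = 0 := by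
      have h := hμ_pos a
      rw [Complex.le_def] at h
      exact h.2.symm
    have h2 : (μ (star (a + 1) * (a + 1))).im = 0 := by
      have h := hμ_pos (a + 1)
      rw [Complex.le_def] at h
      exact h.2.symm
    have hsa : star (a + 1) * (a + 1) = star a * a + a + a + 1 := by
      rw [star_add, star_one, ha.star_eq]; noncomm_ring
    rw [hsa, map_add, map_add, map_add, hμ_one] at h2
    simp only [Complex.add_im, Complex.one_im, h1] at h2
    linarith
  -- total boundedness data
  set S := {a : A | a ∈ D ∧ L a ≤ 1 ∧ μ a = 0} with hS
  have hδ : 0 < ε / (3 * B') := by positivity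
  obtain ⟨t, ht_fin, ht_cover⟩ := (Metric.totallyBounded_iff.mp h_tb) _ hδ
  have hev : ∀ᶠ n in Filter.atTop, ∀ y ∈ t, ‖α n y - α' y‖ ≤ ε / 3 := by
    rw [ht_fin.eventually_all]
    intro y _
    have := (h_ptwise y).eventually_lt_const (by positivity : (0:ℝ) < ε / 3)
    exact this.mono fun n hn => le_of_lt hn
  obtain ⟨N, hN⟩ := Filter.eventually_atTop.mp hev
  refine ⟨N, fun n hn a haD haL => ?_⟩
  set r : ℝ := (μ a).re with hr
  set b : A := a - r • 1 with hb
  have haSA : IsSelfAdjoint a := hD_sa a haD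
  have hbD : b ∈ D := D.sub_mem haD (D.smul_mem r hD_one)
  have hbL : L b ≤ 1 := by
    have := hL_add a haD ((-r) • 1) (D.smul_mem _ hD_one)
    rw [hL_smul (-r) 1 hD_one, hL_one, mul_zero, add_zero] at this
    calc L b = L (a + (-r) • 1) := by rw [hb, sub_eq_add_neg, neg_smul]
    _ ≤ L a := this
    _ ≤ 1 := haL
  have hμa : μ a = (r : ℂ) := by
    apply Complex.ext
    · simp [hr]
    · simp [him a haSA]
  have hbμ : μ b = 0 := by
    rw [hb, map_sub, μ.map_smul_of_tower, hμ_one, hμa]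
    simp
  have hbS : b ∈ S := ⟨hbD, hbL, hbμ⟩
  obtain ⟨y, hy⟩ := Set.mem_iUnion₂.mp (ht_cover hbS)
  obtain ⟨hyt, hyd⟩ := hy
  have hdist : ‖b - y‖ < ε / (3 * B') := by
    rw [← dist_eq_norm]; exact hyd
  -- the difference only depends on b
  have hkey : ∀ γ : A →L[ℂ] B, γ 1 = 1 → γ a = γ b + r • 1 := by
    intro γ hγ
    rw [hb, map_sub, γ.map_smul_of_tower, hγ]
    abel
  have hdiff : α n a - α' a = α n b - α' b := by
    rw [hkey (α n) (hα_one n), hkey α' hα'_one]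
    abel
  clear_value r b
  have hbound : ∀ γ : A →L[ℂ] B, ‖γ‖ ≤ B' → ‖γ b - γ y‖ ≤ ε / 3 := by
    intro γ hγ
    calc ‖γ b - γ y‖ = ‖γ (b - y)‖ := by rw [map_sub]

    _ ≤ ‖γ‖ * ‖b - y‖ := γ.le_opNorm _
    _ ≤ B' * (ε / (3 * B')) := by
        apply mul_le_mul hγ (le_of_lt hdist) (norm_nonneg _) (le_of_lt hB')
    _ = ε / 3 := by field_simp
  calc ‖α n a - α' a‖ = ‖(α n b - α n y) + (α n y - α' y) + (α' y - α' b)‖ := by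
        rw [hdiff]; congr 1; abel
  _ ≤ ‖α n b - α n y‖ + ‖α n y - α' y‖ + ‖α' y - α' b‖ := norm_add₃_le
  _ ≤ ε / 3 + ε / 3 + ε / 3 := by
      have h1 := hbound (α n) (hα_bdd n)
      have h2 := hN n hn y hyt
      have h3 : ‖α' y - α' b‖ ≤ ε / 3 := by
        rw [norm_sub_rev]; exact hbound α' hα'_bdd
      linarith
  _ = ε := by ring
end

section
/- Let (G₁,δ₁), (G₂,δ₂), and (G₃,δ₃) be three metric monoids. Let ε₁, ε₂ ∈ (0, √2/2]. If (ς₁, κ₁) is a (1/ε₁)-local ε₁-almost isometric isomorphism from (G₁,δ₁) to (G₂,δ₂) and (ς₂, κ₂) is a (1/ε₂)-local ε₂-almost isometric isomorphism from (G₂,δ₂) to (G₃,δ₃), then (ς₂ ∘ ς₁, κ₁ ∘ κ₂) is a (1/(ε₁+ε₂))-local (ε₁+ε₂)-almost isometric isomorphism from (G₁,δ₁) to (G₃,δ₃). -/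
/-- Composition of local almost isometric isomorphisms: a
`(1/ε₁)`-local `ε₁`-almost isometric isomorphism followed by a `(1/ε₂)`-local
`ε₂`-almost isometric isomorphism yields a `(1/(ε₁+ε₂))`-local `(ε₁+ε₂)`-almost
isometric isomorphism, for `ε₁, ε₂ ∈ (0, √2/2]`. -/
theorem uiso_composition
    (G₁ G₂ G₃ : Type*) [Monoid G₁] [MetricSpace G₁] [Monoid G₂] [MetricSpace G₂]
    [Monoid G₃] [MetricSpace G₃]
    (h_left₁ : ∀ g h k : G₁, dist (g * h) (g * k) = dist h k)
    (h_cont₁ : Continuous fun p : G₁ × G₁ => p.1 * p.2)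
    (h_left₂ : ∀ g h k : G₂, dist (g * h) (g * k) = dist h k)
    (h_cont₂ : Continuous fun p : G₂ × G₂ => p.1 * p.2)
    (h_left₃ : ∀ g h k : G₃, dist (g * h) (g * k) = dist h k)
    (h_cont₃ : Continuous fun p : G₃ × G₃ => p.1 * p.2)
    (ε₁ ε₂ : ℝ) (hε₁ : 0 < ε₁) (hε₁' : ε₁ ≤ Real.sqrt 2 / 2)
    (hε₂ : 0 < ε₂) (hε₂' : ε₂ ≤ Real.sqrt 2 / 2)
    (ς₁ : G₁ → G₂) (κ₁ : G₂ → G₁) (ς₂ : G₂ → G₃) (κ₂ : G₃ → G₂)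
    (h₁ : IsLocAlmostIsoIso ς₁ κ₁ ε₁ (1 / ε₁))
    (h₂ : IsLocAlmostIsoIso ς₂ κ₂ ε₂ (1 / ε₂)) :
    IsLocAlmostIsoIso (ς₂ ∘ ς₁) (κ₁ ∘ κ₂) (ε₁ + ε₂) (1 / (ε₁ + ε₂)) := by
  obtain ⟨hςe₁, hκe₁, hA₁, hB₁⟩ := h₁
  obtain ⟨hςe₂, hκe₂, hA₂, hB₂⟩ := h₂
  have hs2 : Real.sqrt 2 ^ 2 = 2 := Real.sq_sqrt (by norm_num)
  have hs2' : (0:ℝ) ≤ Real.sqrt 2 := Real.sqrt_nonneg 2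
  have hsum : (0:ℝ) < ε₁ + ε₂ := by linarith
  have key1 : ε₁ * (ε₁ + ε₂) ≤ 1 := by nlinarith
  have key2 : ε₂ * (ε₁ + ε₂) ≤ 1 := by nlinarith
  have hle1 : 1 / (ε₁ + ε₂) ≤ 1 / ε₁ := by
    apply one_div_le_one_div_of_le hε₁; linarith
  have hle2 : 1 / (ε₁ + ε₂) ≤ 1 / ε₂ := by
    apply one_div_le_one_div_of_le hε₂; linarith
  -- 1/(ε₁+ε₂) + ε₁ ≤ 1/ε₂ and symmetric
  have hbound1 : 1 / (ε₁ + ε₂) + ε₁ ≤ 1 / ε₂ := by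
    rw [div_add' _ _ _ (ne_of_gt hsum), div_le_div_iff₀ hsum hε₂]
    nlinarith
  have hbound2 : 1 / (ε₁ + ε₂) + ε₂ ≤ 1 / ε₁ := by
    rw [div_add' _ _ _ (ne_of_gt hsum), div_le_div_iff₀ hsum hε₁]
    nlinarith
  have one_mem₁ : (1:G₁) ∈ Metric.closedBall (1:G₁) (1/ε₁) := by
    simp; positivity
  have one_mem₂ : (1:G₂) ∈ Metric.closedBall (1:G₂) (1/ε₂) := by
    simp; positivity
  have one_mem₂' : (1:G₂) ∈ Metric.closedBall (1:G₂) (1/ε₁) := by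
    simp; positivity
  have one_mem₃ : (1:G₃) ∈ Metric.closedBall (1:G₃) (1/ε₂) := by
    simp; positivity
  -- ς₁ almost preserves distance to 1
  have hς₁d : ∀ g : G₁, g ∈ Metric.closedBall (1:G₁) (1/(ε₁+ε₂)) →
      ς₁ g ∈ Metric.closedBall (1:G₂) (1/ε₂) := by
    intro g hg
    rw [Metric.mem_closedBall] at hg ⊢
    have hg' : g ∈ Metric.closedBall (1:G₁) (1/ε₁) :=
      Metric.mem_closedBall.2 (le_trans hg hle1)
    have := hA₁ g hg' 1 one_mem₁ 1 one_mem₂'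
    rw [hςe₁, hκe₁, mul_one, mul_one] at this
    have := abs_le.1 this
    linarith [this.1, this.2]
  -- κ₂ almost preserves distance to 1
  have hκ₂d : ∀ h : G₃, h ∈ Metric.closedBall (1:G₃) (1/(ε₁+ε₂)) →
      κ₂ h ∈ Metric.closedBall (1:G₂) (1/ε₁) := by
    intro h hh
    rw [Metric.mem_closedBall] at hh ⊢
    have hh' : h ∈ Metric.closedBall (1:G₃) (1/ε₂) :=
      Metric.mem_closedBall.2 (le_trans hh hle2)
    have := hB₂ h hh' 1 one_mem₃ 1 one_mem₂
    rw [hςe₂, hκe₂, mul_one, mul_one] at this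
    have := abs_le.1 this
    linarith [this.1, this.2]
  refine ⟨by simp [hςe₁, hςe₂], by simp [hκe₁, hκe₂], ?_, ?_⟩
  · intro g hg g' hg' h hh
    have hgε : g ∈ Metric.closedBall (1:G₁) (1/ε₁) :=
      Metric.mem_closedBall.2 (le_trans (Metric.mem_closedBall.1 hg) hle1)
    have hg'ε : g' ∈ Metric.closedBall (1:G₁) (1/ε₁) :=
      Metric.mem_closedBall.2 (le_trans (Metric.mem_closedBall.1 hg') hle1)
    have hhε : h ∈ Metric.closedBall (1:G₃) (1/ε₂) :=
      Metric.mem_closedBall.2 (le_trans (Metric.mem_closedBall.1 hh) hle2)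
    have t2 := hA₂ (ς₁ g) (hς₁d g hg) (ς₁ g') (hς₁d g' hg') h hhε
    have t1 := hA₁ g hgε g' hg'ε (κ₂ h) (hκ₂d h hh)
    have t2' := abs_le.1 t2
    have t1' := abs_le.1 t1
    simp only [Function.comp_apply]
    rw [abs_le]
    constructor <;> linarith [t1'.1, t1'.2, t2'.1, t2'.2]
  · intro g hg g' hg' h hh
    have hgε : g ∈ Metric.closedBall (1:G₃) (1/ε₂) :=
      Metric.mem_closedBall.2 (le_trans (Metric.mem_closedBall.1 hg) hle2)
    have hg'ε : g' ∈ Metric.closedBall (1:G₃) (1/ε₂) :=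
      Metric.mem_closedBall.2 (le_trans (Metric.mem_closedBall.1 hg') hle2)
    have hhε : h ∈ Metric.closedBall (1:G₁) (1/ε₁) :=
      Metric.mem_closedBall.2 (le_trans (Metric.mem_closedBall.1 hh) hle1)
    have t2 := hB₂ g hgε g' hg'ε (ς₁ h) (hς₁d h hh)
    have t1 := hB₁ (κ₂ g) (hκ₂d g hg) (κ₂ g') (hκ₂d g' hg') h hhε
    have t2' := abs_le.1 t2
    have t1' := abs_le.1 t1
    simp only [Function.comp_apply]
    rw [abs_le]
    constructor <;> linarith [t1'.1, t1'.2, t2'.1, t2'.2]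
end

section
/- Let (G₁,δ₁) and (G₂,δ₂) be two metric monoids, and let ε ≥ 0 and r > 0. If (ς₁, ς₂) is an r-local ε-almost isometric isomorphism from (G₁,δ₁) to (G₂,δ₂), then for {j,k} = {1,2}, writing r' = max{0, r − ε}: (1) for all g ∈ G_j[r] and h ∈ G_k[r], |δ_k(ς_j(g), h) − δ_j(g, ς_k(h))| ≤ ε; (2) for all t ∈ [0, r] and all g ∈ G_j[t], ς_j(g) ∈ G_k[t + ε]; (3) for all g ∈ G_j[r'], δ_j(ς_k(ς_j(g)), g) ≤ ε; (4) for all g, g' ∈ G_j[r'/2], δ_k(ς_j(g)ς_j(g'), ς_j(g g')) ≤ 2ε; (5) for all g, g' ∈ G_j[r'], |δ_k(ς_j(g), ς_j(g')) − δ_j(g, g')| ≤ 2ε. -/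
section Helpers

variable {G H : Type*} [Monoid G] [MetricSpace G] [Monoid H] [MetricSpace H]

lemma loc_symm {ς : G → H} {κ : H → G} {ε r : ℝ} (h : IsLocAlmostIsoIso ς κ ε r) :
    IsLocAlmostIsoIso κ ς ε r := ⟨h.2.1, h.1, h.2.2.2, h.2.2.1⟩

lemma one_mem {r : ℝ} (hr : 0 ≤ r) : (1 : G) ∈ Metric.closedBall (1 : G) r := by
  simp [hr]

lemma propA {ς : G → H} {κ : H → G} {ε r : ℝ} (hr : 0 ≤ r)
    (h : IsLocAlmostIsoIso ς κ ε r) :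
    ∀ g ∈ Metric.closedBall (1 : G) r, ∀ x ∈ Metric.closedBall (1 : H) r,
      |dist (ς g) x - dist g (κ x)| ≤ ε := by
  intro g hg x hx
  have := h.2.2.1 g hg 1 (one_mem hr) x hx
  simpa [h.1] using this

lemma propB {ς : G → H} {κ : H → G} {ε r : ℝ} (hr : 0 ≤ r)
    (h : IsLocAlmostIsoIso ς κ ε r) :
    ∀ t : ℝ, 0 ≤ t → t ≤ r → ∀ g ∈ Metric.closedBall (1 : G) t,
      ς g ∈ Metric.closedBall (1 : H) (t + ε) := by
  intro t _ htr g hg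
  have hg' : g ∈ Metric.closedBall (1 : G) r :=
    Metric.closedBall_subset_closedBall htr hg
  have := propA hr h g hg' 1 (one_mem hr)
  rw [h.2.1] at this
  have h1 := abs_le.1 this
  simp only [Metric.mem_closedBall] at *
  linarith [h1.1, h1.2, hg]

lemma propC {ς : G → H} {κ : H → G} {ε r : ℝ} (hε : 0 ≤ ε) (hr : 0 ≤ r)
    (h : IsLocAlmostIsoIso ς κ ε r) :
    ∀ g ∈ Metric.closedBall (1 : G) (max 0 (r - ε)), dist (κ (ς g)) g ≤ ε := by
  intro g hg
  rcases le_or_gt r ε with hre | hre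
  · have h0 : max 0 (r - ε) = 0 := max_eq_left (by linarith)
    rw [h0, Metric.closedBall_zero, Set.mem_singleton_iff] at hg
    subst hg
    simp [h.1, h.2.1, hε]
  · have h0 : max 0 (r - ε) = r - ε := max_eq_right (by linarith)
    rw [h0] at hg
    have hgr : g ∈ Metric.closedBall (1 : G) r :=
      Metric.closedBall_subset_closedBall (by linarith) hg
    have hsg : ς g ∈ Metric.closedBall (1 : H) r := by
      have := propB hr h (r - ε) (by linarith) (by linarith) g hg
      simpa using this
    have := propA hr h g hgr (ς g) hsg
    rw [dist_self] at this
    have h1 := abs_le.1 this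
    rw [dist_comm]
    linarith [h1.1]

lemma propD {ς : G → H} {κ : H → G} {ε r : ℝ} (hε : 0 ≤ ε) (hr : 0 ≤ r)
    (h_left : ∀ g h k : G, dist (g * h) (g * k) = dist h k)
    (h : IsLocAlmostIsoIso ς κ ε r) :
    ∀ g ∈ Metric.closedBall (1 : G) (max 0 (r - ε) / 2),
      ∀ g' ∈ Metric.closedBall (1 : G) (max 0 (r - ε) / 2),
        dist (ς g * ς g') (ς (g * g')) ≤ 2 * ε := by
  intro g hg g' hg'
  rcases le_or_gt r ε with hre | hre
  · have h0 : max 0 (r - ε) = 0 := max_eq_left (by linarith)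
    rw [h0] at hg hg'
    norm_num at hg hg'
    subst hg; subst hg'
    simp [h.1, hε]
  · have h0 : max 0 (r - ε) = r - ε := max_eq_right (by linarith)
    rw [h0] at hg hg'
    simp only [Metric.mem_closedBall] at hg hg'
    -- g * g' ∈ closedBall 1 (r - ε)
    have hmul : g * g' ∈ Metric.closedBall (1 : G) (max 0 (r - ε)) := by
      rw [h0, Metric.mem_closedBall]
      have h1 : dist (g * g') 1 ≤ dist (g * g') g + dist g 1 := dist_triangle _ _ _
      have h2 : dist (g * g') g = dist g' 1 := by
        have := h_left g g' 1
        simpa using this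
      linarith
    have hmulr : g * g' ∈ Metric.closedBall (1 : G) r := by
      refine Metric.closedBall_subset_closedBall ?_ hmul
      simp [h0]; linarith
    have hgr : g ∈ Metric.closedBall (1 : G) r := by
      rw [Metric.mem_closedBall]; linarith
    have hgr' : g' ∈ Metric.closedBall (1 : G) r := by
      rw [Metric.mem_closedBall]; linarith
    have hsmul : ς (g * g') ∈ Metric.closedBall (1 : H) r := by
      have := propB hr h (r - ε) (by linarith) (by linarith) (g * g')
        (by rwa [h0] at hmul)
      simpa using this
    have h1 := h.2.2.1 g hgr g' hgr' (ς (g * g')) hsmul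
    have h2 : dist (g * g') (κ (ς (g * g'))) ≤ ε := by
      rw [dist_comm]
      exact propC hε hr h (g * g') hmul
    have h3 := abs_le.1 h1
    linarith [h3.2]

lemma propE {ς : G → H} {κ : H → G} {ε r : ℝ} (hε : 0 ≤ ε) (hr : 0 ≤ r)
    (h : IsLocAlmostIsoIso ς κ ε r) :
    ∀ g ∈ Metric.closedBall (1 : G) (max 0 (r - ε)),
      ∀ g' ∈ Metric.closedBall (1 : G) (max 0 (r - ε)),
        |dist (ς g) (ς g') - dist g g'| ≤ 2 * ε := by
  intro g hg g' hg'
  rcases le_or_gt r ε with hre | hre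
  · have h0 : max 0 (r - ε) = 0 := max_eq_left (by linarith)
    rw [h0, Metric.closedBall_zero, Set.mem_singleton_iff] at hg hg'
    subst hg; subst hg'
    simp
    positivity
  · have h0 : max 0 (r - ε) = r - ε := max_eq_right (by linarith)
    have hgr : g ∈ Metric.closedBall (1 : G) r :=
      Metric.closedBall_subset_closedBall (by rw [h0]; linarith) hg
    have hsg' : ς g' ∈ Metric.closedBall (1 : H) r := by
      have := propB hr h (r - ε) (by linarith) (by linarith) g'
        (by rwa [h0] at hg')
      simpa using this
    have h1 := propA hr h g hgr (ς g') hsg'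
    have h2 : dist (κ (ς g')) g' ≤ ε := propC hε hr h g' hg'
    have h3 : |dist g (κ (ς g')) - dist g g'| ≤ dist (κ (ς g')) g' := by
      have := abs_dist_sub_le (κ (ς g')) g' g
      rwa [dist_comm (κ (ς g')) g, dist_comm g' g] at this
    calc |dist (ς g) (ς g') - dist g g'|
        ≤ |dist (ς g) (ς g') - dist g (κ (ς g'))| + |dist g (κ (ς g')) - dist g g'| := by
          have := abs_sub_abs_le_abs_sub (dist (ς g) (ς g') - dist g g') 0
          exact (abs_sub_le _ _ _)
      _ ≤ ε + ε := add_le_add h1 (h3.trans h2)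
      _ = 2 * ε := by ring

end Helpers


/-- Basic properties of an `r`-local `ε`-almost isometric
isomorphism `(ς₁, ς₂)` between two metric monoids, for `ε ≥ 0` and `r > 0`, with
`r' = max {0, r − ε}`; each assertion is stated in both directions
(`{j,k} = {1,2}`). -/
theorem uiso_properties
    (G₁ G₂ : Type*) [Monoid G₁] [MetricSpace G₁] [Monoid G₂] [MetricSpace G₂]
    (h_left₁ : ∀ g h k : G₁, dist (g * h) (g * k) = dist h k)
    (h_cont₁ : Continuous fun p : G₁ × G₁ => p.1 * p.2)
    (h_left₂ : ∀ g h k : G₂, dist (g * h) (g * k) = dist h k)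
    (h_cont₂ : Continuous fun p : G₂ × G₂ => p.1 * p.2)
    (ε r : ℝ) (hε : 0 ≤ ε) (hr : 0 < r)
    (ς₁ : G₁ → G₂) (ς₂ : G₂ → G₁)
    (h_iso : IsLocAlmostIsoIso ς₁ ς₂ ε r) :
    -- (1)
    ((∀ g ∈ Metric.closedBall (1 : G₁) r, ∀ h ∈ Metric.closedBall (1 : G₂) r,
        |dist (ς₁ g) h - dist g (ς₂ h)| ≤ ε) ∧
      (∀ g ∈ Metric.closedBall (1 : G₂) r, ∀ h ∈ Metric.closedBall (1 : G₁) r,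
        |dist (ς₂ g) h - dist g (ς₁ h)| ≤ ε)) ∧
    -- (2)
    ((∀ t : ℝ, 0 ≤ t → t ≤ r → ∀ g ∈ Metric.closedBall (1 : G₁) t,
        ς₁ g ∈ Metric.closedBall (1 : G₂) (t + ε)) ∧
      (∀ t : ℝ, 0 ≤ t → t ≤ r → ∀ g ∈ Metric.closedBall (1 : G₂) t,
        ς₂ g ∈ Metric.closedBall (1 : G₁) (t + ε))) ∧
    -- (3)
    ((∀ g ∈ Metric.closedBall (1 : G₁) (max 0 (r - ε)), dist (ς₂ (ς₁ g)) g ≤ ε) ∧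
      (∀ g ∈ Metric.closedBall (1 : G₂) (max 0 (r - ε)), dist (ς₁ (ς₂ g)) g ≤ ε)) ∧
    -- (4)
    ((∀ g ∈ Metric.closedBall (1 : G₁) (max 0 (r - ε) / 2),
        ∀ g' ∈ Metric.closedBall (1 : G₁) (max 0 (r - ε) / 2),
          dist (ς₁ g * ς₁ g') (ς₁ (g * g')) ≤ 2 * ε) ∧
      (∀ g ∈ Metric.closedBall (1 : G₂) (max 0 (r - ε) / 2),
        ∀ g' ∈ Metric.closedBall (1 : G₂) (max 0 (r - ε) / 2),
          dist (ς₂ g * ς₂ g') (ς₂ (g * g')) ≤ 2 * ε)) ∧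
    -- (5)
    ((∀ g ∈ Metric.closedBall (1 : G₁) (max 0 (r - ε)),
        ∀ g' ∈ Metric.closedBall (1 : G₁) (max 0 (r - ε)),
          |dist (ς₁ g) (ς₁ g') - dist g g'| ≤ 2 * ε) ∧
      (∀ g ∈ Metric.closedBall (1 : G₂) (max 0 (r - ε)),
        ∀ g' ∈ Metric.closedBall (1 : G₂) (max 0 (r - ε)),
          |dist (ς₂ g) (ς₂ g') - dist g g'| ≤ 2 * ε)) := by
  have symm := loc_symm h_iso
  have hr' := hr.le
  exact ⟨⟨propA hr' h_iso, propA hr' symm⟩,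
    ⟨fun t h0 h1 => propB hr' h_iso t h0 h1, fun t h0 h1 => propB hr' symm t h0 h1⟩,
    ⟨propC hε hr' h_iso, propC hε hr' symm⟩,
    ⟨propD hε hr' h_left₁ h_iso, propD hε hr' h_left₂ symm⟩,
    ⟨propE hε hr' h_iso, propE hε hr' symm⟩⟩
end
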